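/- arXiv:2005.09105 — 11 statements merged into one kernel-verified Lean document; each statement's English description precedes it below -/
import Mathlib

section
/- Let E be a real inner product space and let x₁, x₂, x₃, x₄ ∈ ℝ × E be four points whose first (time) coordinates satisfy τ₁ > τ₂ > τ₃ > τ₄. Write x_{ij}² := ‖x_i − x_j‖² for the squared Euclidean distance, and define the cross-ratios u = x₁₂² x₃₄² / (x₁₃² x₂₄²) and v = x₁₄² x₂₃² / (x₁₃² x₂₄²). Then the quadratic polynomial w² − (1 + u − v)·w + u has no real root w with w ≥ 1. -/
open scoped RealInnerProductSpace

set_option maxHeartbeats 4000000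

/-- Strict Ptolemy inequality for four points `0, A1, A2, A3` whose inner
products with a fixed vector `e` are negative and strictly decreasing. -/
lemma ptolemy_strict {F : Type*} [NormedAddCommGroup F] [InnerProductSpace ℝ F]
    (e A1 A2 A3 : F) (h1 : ⟪e, A1⟫ < 0) (h2 : ⟪e, A2⟫ < ⟪e, A1⟫)
    (h3 : ⟪e, A3⟫ < ⟪e, A2⟫) :
    ‖A1‖ * ‖A2 - A3‖ < ‖A2‖ * ‖A1 - A3‖ + ‖A3‖ * ‖A1 - A2‖ := by
  have hA1 : A1 ≠ 0 := by rintro rfl; simp at h1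
  have hA2 : A2 ≠ 0 := by rintro rfl; simp at h2; linarith
  have hA3 : A3 ≠ 0 := by rintro rfl; simp at h3; linarith
  have n1 : (0:ℝ) < ‖A1‖ := norm_pos_iff.2 hA1
  have n2 : (0:ℝ) < ‖A2‖ := norm_pos_iff.2 hA2
  have n3 : (0:ℝ) < ‖A3‖ := norm_pos_iff.2 hA3
  obtain ⟨a1, ha1⟩ : ∃ x : F, x = (‖A1‖^2)⁻¹ • A1 := ⟨_, rfl⟩
  obtain ⟨a2, ha2⟩ : ∃ x : F, x = (‖A2‖^2)⁻¹ • A2 := ⟨_, rfl⟩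
  obtain ⟨a3, ha3⟩ : ∃ x : F, x = (‖A3‖^2)⁻¹ • A3 := ⟨_, rfl⟩
  have key : ∀ B C : F, B ≠ 0 → C ≠ 0 →
      ‖(‖B‖^2)⁻¹ • B - (‖C‖^2)⁻¹ • C‖ = ‖B - C‖ / (‖B‖ * ‖C‖) := by
    intro B C hB hC
    have nB : (0:ℝ) < ‖B‖ := norm_pos_iff.2 hB
    have nC : (0:ℝ) < ‖C‖ := norm_pos_iff.2 hC
    have hsq : ‖(‖B‖^2)⁻¹ • B - (‖C‖^2)⁻¹ • C‖^2 = (‖B - C‖ / (‖B‖ * ‖C‖))^2 := by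
      rw [norm_sub_sq_real, div_pow, norm_sub_sq_real]
      rw [real_inner_smul_left, real_inner_smul_right, norm_smul, norm_smul]
      simp only [Real.norm_eq_abs, abs_of_nonneg (by positivity : (0:ℝ) ≤ (‖B‖^2)⁻¹),
        abs_of_nonneg (by positivity : (0:ℝ) ≤ (‖C‖^2)⁻¹), mul_pow]
      field_simp
      ring
    calc ‖(‖B‖^2)⁻¹ • B - (‖C‖^2)⁻¹ • C‖
        = √(‖(‖B‖^2)⁻¹ • B - (‖C‖^2)⁻¹ • C‖^2) := by rw [Real.sqrt_sq (norm_nonneg _)]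
      _ = √((‖B - C‖ / (‖B‖ * ‖C‖))^2) := by rw [hsq]
      _ = ‖B - C‖ / (‖B‖ * ‖C‖) := Real.sqrt_sq (by positivity)
  have k21 : ‖a2 - a1‖ = ‖A2 - A1‖ / (‖A2‖ * ‖A1‖) := by
    rw [ha2, ha1]; exact key A2 A1 hA2 hA1
  have k13 : ‖a1 - a3‖ = ‖A1 - A3‖ / (‖A1‖ * ‖A3‖) := by
    rw [ha1, ha3]; exact key A1 A3 hA1 hA3
  have k23 : ‖a2 - a3‖ = ‖A2 - A3‖ / (‖A2‖ * ‖A3‖) := by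
    rw [ha2, ha3]; exact key A2 A3 hA2 hA3
  by_contra hcon
  push_neg at hcon
  -- equality in the triangle inequality for the inverted points
  have htri : dist a2 a1 + dist a1 a3 = dist a2 a3 := by
    have hle : dist a2 a3 ≤ dist a2 a1 + dist a1 a3 := dist_triangle _ _ _
    have hge : dist a2 a1 + dist a1 a3 ≤ dist a2 a3 := by
      simp only [dist_eq_norm, k21, k13, k23]
      rw [div_add_div _ _ (by positivity) (by positivity),
        div_le_div_iff₀ (by positivity) (by positivity)]
      have h12 : ‖A2 - A1‖ = ‖A1 - A2‖ := norm_sub_rev _ _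
      have hmul := mul_le_mul_of_nonneg_left hcon
        (by positivity : (0:ℝ) ≤ ‖A1‖ * ‖A2‖ * ‖A3‖)
      rw [h12]
      nlinarith [hmul]
    linarith
  obtain ⟨s, t, hs, ht, hst, habc⟩ := mem_segment_iff_wbtw.2 (dist_add_dist_eq_iff.1 htri)
  -- now derive a contradiction using the time components
  obtain ⟨c, hc⟩ : ∃ c : ℝ, c = (⟪e, A1⟫ + ⟪e, A2⟫) / 2 := ⟨_, rfl⟩
  have ht' : t = 1 - s := by linarith
  have hkey : c * ⟪a1, a1⟫ - ⟪e, a1⟫ =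
      t * (c * ⟪a3, a3⟫ - ⟪e, a3⟫) + s * (c * ⟪a2, a2⟫ - ⟪e, a2⟫)
        + c * ⟪a2 - a3, a2 - a3⟫ * (s * (s - 1)) := by
    rw [← habc]
    simp only [inner_add_left, inner_add_right, inner_sub_left, inner_sub_right,
      real_inner_smul_left, real_inner_smul_right]
    rw [real_inner_comm a3 a2, ht']
    ring
  have hiS : ∀ B : F, B ≠ 0 → ⟪(‖B‖^2)⁻¹ • B, (‖B‖^2)⁻¹ • B⟫ = (‖B‖^2)⁻¹ := by
    intro B hB
    have nB : (0:ℝ) < ‖B‖ := norm_pos_iff.2 hB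
    rw [real_inner_smul_left, real_inner_smul_right, real_inner_self_eq_norm_sq]
    field_simp
  have e1 : ⟪a1, a1⟫ = (‖A1‖^2)⁻¹ := by rw [ha1]; exact hiS A1 hA1
  have e2 : ⟪a2, a2⟫ = (‖A2‖^2)⁻¹ := by rw [ha2]; exact hiS A2 hA2
  have e3 : ⟪a3, a3⟫ = (‖A3‖^2)⁻¹ := by rw [ha3]; exact hiS A3 hA3
  have f1 : ⟪e, a1⟫ = (‖A1‖^2)⁻¹ * ⟪e, A1⟫ := by rw [ha1, real_inner_smul_right]
  have f2 : ⟪e, a2⟫ = (‖A2‖^2)⁻¹ * ⟪e, A2⟫ := by rw [ha2, real_inner_smul_right]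
  have f3 : ⟪e, a3⟫ = (‖A3‖^2)⁻¹ * ⟪e, A3⟫ := by rw [ha3, real_inner_smul_right]
  rw [e1, e2, e3, f1, f2, f3] at hkey
  have hn1 : (0:ℝ) < (‖A1‖^2)⁻¹ := by positivity
  have hn2 : (0:ℝ) < (‖A2‖^2)⁻¹ := by positivity
  have hn3 : (0:ℝ) < (‖A3‖^2)⁻¹ := by positivity
  have hc1 : c < ⟪e, A1⟫ := by rw [hc]; linarith
  have hc2 : ⟪e, A2⟫ ≤ c := by rw [hc]; linarith
  have hc3 : ⟪e, A3⟫ ≤ c := by rw [hc]; linarith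
  have hL : c * (‖A1‖^2)⁻¹ - (‖A1‖^2)⁻¹ * ⟪e, A1⟫ < 0 := by
    have := mul_pos hn1 (sub_pos.2 hc1); linarith [this]
  have hR3 : 0 ≤ c * (‖A3‖^2)⁻¹ - (‖A3‖^2)⁻¹ * ⟪e, A3⟫ := by
    have := mul_nonneg hn3.le (sub_nonneg.2 hc3); linarith [this]
  have hR2 : 0 ≤ c * (‖A2‖^2)⁻¹ - (‖A2‖^2)⁻¹ * ⟪e, A2⟫ := by
    have := mul_nonneg hn2.le (sub_nonneg.2 hc2); linarith [this]
  have hcneg : c ≤ 0 := by rw [hc]; linarith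
  have hq : (0:ℝ) ≤ ⟪a2 - a3, a2 - a3⟫ := real_inner_self_nonneg
  have hs1 : s ≤ 1 := by linarith
  linarith [hkey, hL, mul_nonneg ht hR3, mul_nonneg hs hR2,
    mul_nonneg (mul_nonneg (neg_nonneg.2 hcneg) hq) (mul_nonneg hs (by linarith : (0:ℝ) ≤ 1 - s))]


/-- For a Euclidean four-point configuration in `ℝ × E` with strictly decreasing
time coordinates, the cross-ratio variables `z, z̄` (the roots of
`w² - (1+u-v)w + u`) do not lie in `[1, +∞)`. -/
theorem stmt_1 {E : Type*} [NormedAddCommGroup E] [InnerProductSpace ℝ E]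
    (τ : Fin 4 → ℝ) (y : Fin 4 → E)
    (h12 : τ 0 > τ 1) (h23 : τ 1 > τ 2) (h34 : τ 2 > τ 3) :
    let d : Fin 4 → Fin 4 → ℝ := fun i j => (τ i - τ j) ^ 2 + ‖y i - y j‖ ^ 2
    let u : ℝ := d 0 1 * d 2 3 / (d 0 2 * d 1 3)
    let v : ℝ := d 0 3 * d 1 2 / (d 0 2 * d 1 3)
    ∀ w : ℝ, 1 ≤ w → w ^ 2 - (1 + u - v) * w + u ≠ 0 := by
  intro d u v w hw hroot
  set F := WithLp 2 (ℝ × E)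
  let X : Fin 4 → F := fun i => (WithLp.equiv 2 (ℝ × E)).symm (τ i, y i)
  let e : F := (WithLp.equiv 2 (ℝ × E)).symm (1, 0)
  have hinner : ∀ i j : Fin 4, ⟪e, X i - X j⟫ = τ i - τ j := by
    intro i j
    rw [show X i - X j = (WithLp.equiv 2 (ℝ × E)).symm ((τ i, y i) - (τ j, y j)) from rfl]
    show ⟪(WithLp.equiv 2 (ℝ × E)).symm ((1:ℝ), (0:E)), _⟫ = _
    rw [WithLp.prod_inner_apply]
    simp [WithLp.equiv_symm_apply, WithLp.ofLp_toLp]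
  have hnorm : ∀ i j : Fin 4, ‖X i - X j‖ ^ 2 = d i j := by
    intro i j
    rw [← real_inner_self_eq_norm_sq]
    rw [show X i - X j = (WithLp.equiv 2 (ℝ × E)).symm ((τ i, y i) - (τ j, y j)) from rfl]
    rw [WithLp.prod_inner_apply]
    simp only [WithLp.equiv_symm_apply, WithLp.ofLp_toLp, real_inner_self_eq_norm_sq, d]
    simp [Real.norm_eq_abs, sq_abs]
  -- positivity of the squared distances
  have hdpos : ∀ i j : Fin 4, τ j < τ i → 0 < d i j := by
    intro i j hij
    have h1 : 0 < (τ i - τ j) ^ 2 := pow_pos (by linarith) 2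
    have h2 : 0 ≤ ‖y i - y j‖ ^ 2 := sq_nonneg _
    show 0 < (τ i - τ j) ^ 2 + ‖y i - y j‖ ^ 2
    linarith
  have hd02 : 0 < d 0 2 := hdpos 0 2 (by linarith)
  have hd13 : 0 < d 1 3 := hdpos 1 3 (by linarith)
  have hd03 : 0 < d 0 3 := hdpos 0 3 (by linarith)
  have hd12 : 0 < d 1 2 := hdpos 1 2 (by linarith)
  have hd01 : 0 < d 0 1 := hdpos 0 1 (by linarith)
  have hd23 : 0 < d 2 3 := hdpos 2 3 (by linarith)
  obtain ⟨a, hadef⟩ : ∃ x : ℝ, x = ‖X 0 - X 1‖ * ‖X 2 - X 3‖ := ⟨_, rfl⟩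
  obtain ⟨b, hbdef⟩ : ∃ x : ℝ, x = ‖X 0 - X 3‖ * ‖X 1 - X 2‖ := ⟨_, rfl⟩
  obtain ⟨C, hCdef⟩ : ∃ x : ℝ, x = ‖X 0 - X 2‖ * ‖X 1 - X 3‖ := ⟨_, rfl⟩
  have ha2 : a ^ 2 = d 0 1 * d 2 3 := by rw [hadef, mul_pow, hnorm, hnorm]
  have hb2 : b ^ 2 = d 0 3 * d 1 2 := by rw [hbdef, mul_pow, hnorm, hnorm]
  have hC2 : C ^ 2 = d 0 2 * d 1 3 := by rw [hCdef, mul_pow, hnorm, hnorm]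
  have ha0 : 0 ≤ a := by rw [hadef]; positivity
  have hb0 : 0 < b := by
    have h : 0 < b ^ 2 := by rw [hb2]; exact mul_pos hd03 hd12
    have h' : 0 ≤ b := by rw [hbdef]; positivity
    have hne : b ≠ 0 := by intro h0; rw [h0] at h; simp at h
    exact lt_of_le_of_ne h' (Ne.symm hne)
  have hC0 : 0 < C := by
    have h : 0 < C ^ 2 := by rw [hC2]; exact mul_pos hd02 hd13
    have h' : 0 ≤ C := by rw [hCdef]; positivity
    have hne : C ≠ 0 := by intro h0; rw [h0] at h; simp at h
    exact lt_of_le_of_ne h' (Ne.symm hne)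
  -- the root equation, cleared of denominators
  have hu : u = a ^ 2 / C ^ 2 := by rw [ha2, hC2]
  have hv : v = b ^ 2 / C ^ 2 := by rw [hb2, hC2]
  rw [hu, hv] at hroot
  have hE : C ^ 2 * w ^ 2 - (C ^ 2 + a ^ 2 - b ^ 2) * w + a ^ 2 = 0 := by
    have hC2ne : C ^ 2 ≠ 0 := by positivity
    field_simp at hroot
    linarith [hroot]
  -- strict Ptolemy inequality
  have hpt : a < C + b := by
    have h1 : ⟪e, X 1 - X 0⟫ < 0 := by rw [hinner]; linarith
    have h2 : ⟪e, X 2 - X 0⟫ < ⟪e, X 1 - X 0⟫ := by rw [hinner, hinner]; linarith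
    have h3 : ⟪e, X 3 - X 0⟫ < ⟪e, X 2 - X 0⟫ := by rw [hinner, hinner]; linarith
    have := ptolemy_strict e (X 1 - X 0) (X 2 - X 0) (X 3 - X 0) h1 h2 h3
    rw [sub_sub_sub_cancel_right, sub_sub_sub_cancel_right, sub_sub_sub_cancel_right] at this
    rw [norm_sub_rev (X 1) (X 0), norm_sub_rev (X 2) (X 0), norm_sub_rev (X 3) (X 0)] at this
    rw [hadef, hbdef, hCdef]
    linarith [this]
  -- scalar contradiction
  have hb2w : b ^ 2 * w = (w - 1) * (a ^ 2 - C ^ 2 * w) := by linear_combination hE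
  have hwne : w ≠ 1 := by
    intro h; rw [h] at hb2w; simp at hb2w; nlinarith
  have hw1 : 1 < w := lt_of_le_of_ne hw (Ne.symm hwne)
  have hprod : 0 < (w - 1) * (a ^ 2 - C ^ 2 * w) := by
    rw [← hb2w]; positivity
  have hgt : 0 < a ^ 2 - C ^ 2 * w := by
    rcases lt_trichotomy (a ^ 2 - C ^ 2 * w) 0 with h | h | h
    · nlinarith
    · nlinarith
    · exact h
  have haC : C < a := by nlinarith
  have h1 : w * ((a - C) ^ 2 - b ^ 2) = (a - C * w) ^ 2 := by linear_combination -hb2w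
  have h2 : b ^ 2 ≤ (a - C) ^ 2 := by nlinarith [h1, sq_nonneg (a - C * w)]
  have h3 : b ≤ a - C := by nlinarith [h2, hb0, haC]
  linarith
end

section
/- Let z₁, z₂, z₃, z₄ ∈ ℂ satisfy Re z₁ > Re z₂ > Re z₃ > Re z₄. Then (z₁ − z₃)(z₂ − z₄) ≠ 0, and the cross-ratio z = (z₁ − z₂)(z₃ − z₄) / ((z₁ − z₃)(z₂ − z₄)) satisfies z ∉ {0} ∪ [1, +∞). -/
set_option maxHeartbeats 1000000

/-- A complex number with positive real part is nonzero. -/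
lemma re_pos_ne_zero {w : ℂ} (h : 0 < w.re) : w ≠ 0 := by
  intro h0; rw [h0] at h; simp at h

/-- Core real inequality argument: the system coming from
`b*(a+b+c) + k*a*c = 0` with `Re a, Re b, Re c > 0` and `0 < k ≤ 1`
is contradictory. -/
lemma core (a1 a2 b1 b2 c1 c2 k : ℝ) (ha : 0 < a1) (hb : 0 < b1) (hc : 0 < c1)
    (hk0 : 0 < k) (hk1 : k ≤ 1)
    (E1 : b1*(a1+b1+c1) - b2*(a2+b2+c2) + k*(a1*c1 - a2*c2) = 0)
    (E2 : b1*(a2+b2+c2) + b2*(a1+b1+c1) + k*(a1*c2 + a2*c1) = 0) : False := by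
  have hac : 0 < a1 * c1 := mul_pos ha hc
  -- key polynomial inequality
  have key : (a1*c2+a2*c1)^2 ≤ (a1+c1)*((a1^2+a2^2)*c1 + (c1^2+c2^2)*a1) := by
    have hid : (a1+c1)*((a1^2+a2^2)*c1 + (c1^2+c2^2)*a1) - (a1*c2+a2*c1)^2
        = a1*c1*((a1+c1)^2+(a2-c2)^2) := by ring
    nlinarith [mul_nonneg hac.le (add_nonneg (sq_nonneg (a1+c1)) (sq_nonneg (a2-c2)))]
  have hB : 0 ≤ (a1+c1)^2+(a2+c2)^2+4*k*(a1*c1-a2*c2) := by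
    have hid : (a1+c1)^2+(a2+c2)^2+4*k*(a1*c1-a2*c2)
        = (a1+c1)^2 + 4*(k*(a1*c1)) + k*(a2-c2)^2 + (1-k)*(a2+c2)^2 := by ring
    rw [hid]
    have h1 : 0 ≤ k*(a1*c1) := mul_nonneg hk0.le hac.le
    have h2 : 0 ≤ k*(a2-c2)^2 := mul_nonneg hk0.le (sq_nonneg _)
    have h3 : 0 ≤ (1-k)*(a2+c2)^2 := mul_nonneg (by linarith) (sq_nonneg _)
    nlinarith [sq_nonneg (a1+c1)]
  have e1 : (a1+2*b1+c1)^2 - (a2+2*b2+c2)^2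
      = (a1+c1)^2-(a2+c2)^2-4*k*(a1*c1-a2*c2) := by linear_combination 4*E1
  have e2 : 2*((a1+2*b1+c1)*(a2+2*b2+c2))
      = 2*((a1+c1)*(a2+c2)) - 4*(k*(a1*c2+a2*c1)) := by linear_combination 4*E2
  -- A^2 ≤ B^2
  have hA2B2 : ((a1+2*b1+c1)^2+(a2+2*b2+c2)^2)^2
      ≤ ((a1+c1)^2+(a2+c2)^2+4*k*(a1*c1-a2*c2))^2 := by
    have expand : ((a1+2*b1+c1)^2+(a2+2*b2+c2)^2)^2
        = ((a1+2*b1+c1)^2-(a2+2*b2+c2)^2)^2 + (2*((a1+2*b1+c1)*(a2+2*b2+c2)))^2 := by ring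
    rw [expand, e1, e2]
    have diff : ((a1+c1)^2+(a2+c2)^2+4*k*(a1*c1-a2*c2))^2
        - (((a1+c1)^2-(a2+c2)^2-4*k*(a1*c1-a2*c2))^2
          + (2*((a1+c1)*(a2+c2)) - 4*(k*(a1*c2+a2*c1)))^2)
        = 16*(k*((a1+c1)*((a1^2+a2^2)*c1 + (c1^2+c2^2)*a1) - k*(a1*c2+a2*c1)^2)) := by
      ring
    have hkk : k*(a1*c2+a2*c1)^2 ≤ (a1+c1)*((a1^2+a2^2)*c1 + (c1^2+c2^2)*a1) := by
      have : k*(a1*c2+a2*c1)^2 ≤ (a1*c2+a2*c1)^2 := by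
        nlinarith [sq_nonneg (a1*c2+a2*c1)]
      linarith
    have h16 : 0 ≤ 16*(k*((a1+c1)*((a1^2+a2^2)*c1 + (c1^2+c2^2)*a1) - k*(a1*c2+a2*c1)^2)) := by
      have : 0 ≤ k*((a1+c1)*((a1^2+a2^2)*c1 + (c1^2+c2^2)*a1) - k*(a1*c2+a2*c1)^2) :=
        mul_nonneg hk0.le (by linarith)
      linarith
    linarith
  -- A ≤ B
  have hAB : (a1+2*b1+c1)^2+(a2+2*b2+c2)^2
      ≤ (a1+c1)^2+(a2+c2)^2+4*k*(a1*c1-a2*c2) :=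
    le_of_pow_le_pow_left₀ two_ne_zero hB hA2B2
  -- conclude x^2 ≤ s1^2 but x > s1 > 0
  have hx : (a1+2*b1+c1)^2 - (a1+c1)^2 = 4*(b1*(a1+c1)) + 4*(b1*b1) := by ring
  have h1 : 0 < b1*(a1+c1) := mul_pos hb (add_pos ha hc)
  have h2 : 0 < b1*b1 := mul_pos hb hb
  linarith

/-- 2d case of Theorem 3.1: if `Re z₁ > Re z₂ > Re z₃ > Re z₄` then the
denominator `(z₁-z₃)(z₂-z₄)` is nonzero and the cross-ratio
`z = (z₁-z₂)(z₃-z₄)/((z₁-z₃)(z₂-z₄))` avoids `{0} ∪ [1, +∞)`. -/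
theorem stmt_2 (z₁ z₂ z₃ z₄ : ℂ)
    (h12 : z₁.re > z₂.re) (h23 : z₂.re > z₃.re) (h34 : z₃.re > z₄.re) :
    (z₁ - z₃) * (z₂ - z₄) ≠ 0 ∧
    (z₁ - z₂) * (z₃ - z₄) / ((z₁ - z₃) * (z₂ - z₄)) ≠ 0 ∧
    ∀ t : ℝ, 1 ≤ t → (z₁ - z₂) * (z₃ - z₄) / ((z₁ - z₃) * (z₂ - z₄)) ≠ (t : ℂ) := by
  set a : ℂ := z₁ - z₂ with ha_def
  set b : ℂ := z₂ - z₃ with hb_def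
  set c : ℂ := z₃ - z₄ with hc_def
  have ha : 0 < a.re := by simp [ha_def, Complex.sub_re]; linarith
  have hb : 0 < b.re := by simp [hb_def, Complex.sub_re]; linarith
  have hc : 0 < c.re := by simp [hc_def, Complex.sub_re]; linarith
  have hab : z₁ - z₃ = a + b := by ring
  have hbc : z₂ - z₄ = b + c := by ring
  have habp : 0 < (a + b).re := by rw [Complex.add_re]; linarith
  have hbcp : 0 < (b + c).re := by rw [Complex.add_re]; linarith
  have hD : (z₁ - z₃) * (z₂ - z₄) ≠ 0 := by
    rw [hab, hbc]
    exact mul_ne_zero (re_pos_ne_zero habp) (re_pos_ne_zero hbcp)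
  have hN : (z₁ - z₂) * (z₃ - z₄) ≠ 0 :=
    mul_ne_zero (re_pos_ne_zero ha) (re_pos_ne_zero hc)
  refine ⟨hD, div_ne_zero hN hD, ?_⟩
  intro t ht heq
  rw [div_eq_iff hD] at heq
  rw [hab, hbc] at heq
  have ht0 : (0:ℝ) < t := by linarith
  -- t * (b*(a+b+c)) = (1-t) * (a*c)
  have hEq' : (t:ℂ) * (b * (a + b + c)) = (1 - (t:ℂ)) * (a * c) := by
    linear_combination (-1 : ℂ) * heq
  have hre := congrArg Complex.re hEq'
  have him := congrArg Complex.im hEq'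
  simp only [Complex.mul_re, Complex.mul_im, Complex.add_re, Complex.add_im,
    Complex.sub_re, Complex.sub_im, Complex.ofReal_re, Complex.ofReal_im,
    Complex.one_re, Complex.one_im] at hre him
  set a1 := a.re; set a2 := a.im
  set b1 := b.re; set b2 := b.im
  set c1 := c.re; set c2 := c.im
  -- case t = 1 vs t > 1
  rcases eq_or_lt_of_le ht with ht1 | ht1
  · -- t = 1: b*(a+b+c) = 0 impossible
    rw [← ht1] at hre him
    have hbS : b * (a + b + c) = 0 := by
      apply Complex.ext <;>
        simp only [Complex.mul_re, Complex.mul_im, Complex.add_re, Complex.add_im,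
          Complex.zero_re, Complex.zero_im] <;> linarith [hre, him]
    rcases mul_eq_zero.mp hbS with h | h
    · exact re_pos_ne_zero hb h
    · exact re_pos_ne_zero (by rw [Complex.add_re, Complex.add_re]; linarith : 0 < (a+b+c).re) h
  · -- t > 1: apply core with k = (t-1)/t
    have htne : t ≠ 0 := ht0.ne'
    apply core a1 a2 b1 b2 c1 c2 ((t-1)/t) ha hb hc
      (div_pos (by linarith) ht0) (by rw [div_le_one ht0]; linarith)
    · field_simp
      nlinarith [hre, him]
    · field_simp
      nlinarith [hre, him]
end

section
/- For every ρ ∈ ℂ with |ρ| < 1, one has ρ ∈ (−1, 0] if and only if 4ρ/(1 + ρ)² ∈ (−∞, 0]. -/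
/-- For `ρ` in the open unit disk: `ρ ∈ (-1, 0]` iff `4ρ/(1+ρ)² ∈ (-∞, 0]`. -/
theorem stmt_5 (ρ : ℂ) (h : ‖ρ‖ < 1) :
    (∃ t : ℝ, -1 < t ∧ t ≤ 0 ∧ ρ = (t : ℂ)) ↔
    (∃ t : ℝ, t ≤ 0 ∧ 4 * ρ / (1 + ρ) ^ 2 = (t : ℂ)) := by
  have hne : (1 + ρ) ≠ 0 := by
    intro hz
    have : ρ = -1 := by linear_combination hz
    rw [this] at h
    simp at h
  constructor
  · rintro ⟨t, ht1, ht0, rfl⟩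
    have h1t : (1 + t) ≠ 0 := ne_of_gt (by linarith)
    refine ⟨4 * t / (1 + t) ^ 2, ?_, ?_⟩
    · apply div_nonpos_of_nonpos_of_nonneg
      · linarith
      · positivity
    · push_cast
      rw [div_eq_div_iff (by exact_mod_cast pow_ne_zero 2 hne) (by exact_mod_cast pow_ne_zero 2 h1t)]
  · rintro ⟨t, ht0, heq⟩
    have hE : 4 * ρ = (t : ℂ) * (1 + ρ) ^ 2 := by
      field_simp at heq
      linear_combination heq
    set x := ρ.re with hx
    set y := ρ.im with hy
    have hEre : 4 * x = t * ((1 + x) ^ 2 - y ^ 2) := by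
      have := congrArg Complex.re hE
      simpa [Complex.add_re, Complex.mul_re, Complex.mul_im, pow_two, ← hx, ← hy] using this
      
    have hEim : 4 * y = t * ((1 + x) * y + y * (1 + x)) := by
      have := congrArg Complex.im hE
      simpa [Complex.add_im, Complex.mul_re, Complex.mul_im, pow_two, ← hx, ← hy] using this
    have hxabs : |x| < 1 := lt_of_le_of_lt (Complex.abs_re_le_norm ρ) h
    have hy0 : y = 0 := by
      by_contra hy0
      have hfac : t * (1 + x) = 2 := by
        have : y * (t * (1 + x) - 2) = 0 := by nlinarith [hEim]
        rcases mul_eq_zero.mp this with h1 | h1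
        · exact absurd h1 hy0
        · linarith
      have ht : t < 0 := by
        rcases lt_or_eq_of_le ht0 with h1 | h1
        · exact h1
        · rw [h1] at hfac; simp at hfac
      nlinarith [(abs_lt.mp hxabs).1]
    have hρ : ρ = (x : ℂ) := by
      apply Complex.ext <;> simp [← hx, ← hy, hy0]
    have hx1 : -1 < x := by
      cases abs_lt.mp hxabs; linarith
    have hxle : x ≤ 0 := by
      have h1x : (0:ℝ) < (1 + x) ^ 2 := pow_pos (by linarith) 2
      rw [hy0] at hEre
      nlinarith
    exact ⟨x, hx1, hxle, hρ⟩
end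

section
/- For every χ ∈ ℂ with −π < Re χ < π and Im χ > 0 one has cos(χ/2) ≠ 0 and 1/cos²(χ/2) = 4e^{iχ}/(1 + e^{iχ})²; moreover the map χ ↦ 1/cos²(χ/2) is a bijection from the half-strip {χ ∈ ℂ : −π < Re χ < π, Im χ > 0} onto the double-cut plane ℂ ∖ ((−∞, 0] ∪ [1, +∞)). -/
open Real

lemma expI_ne_neg_one (χ : ℂ) (h : 0 < χ.im) : Complex.exp (Complex.I * χ) ≠ -1 := by
  intro heq
  rw [← Complex.exp_pi_mul_I, Complex.exp_eq_exp_iff_exists_int] at heq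
  obtain ⟨n, hn⟩ := heq
  have := congrArg Complex.re hn
  simp [Complex.mul_re] at this
  linarith

lemma cos_key (χ : ℂ) (h : 0 < χ.im) :
    Complex.cos (χ / 2) ≠ 0 ∧
    1 / Complex.cos (χ / 2) ^ 2 =
      4 * Complex.exp (Complex.I * χ) / (1 + Complex.exp (Complex.I * χ)) ^ 2 := by
  have h1 := expI_ne_neg_one χ h
  have hne : 1 + Complex.exp (Complex.I * χ) ≠ 0 := by
    intro h0; apply h1; linear_combination h0
  have key : 2 * Complex.cos (χ/2) * Complex.exp (Complex.I*χ/2)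
      = 1 + Complex.exp (Complex.I * χ) := by
    rw [Complex.cos]
    have h2 : Complex.exp (χ/2*Complex.I) * Complex.exp (Complex.I*χ/2)
        = Complex.exp (Complex.I*χ) := by rw [← Complex.exp_add]; ring_nf
    have h3 : Complex.exp (-(χ/2)*Complex.I) * Complex.exp (Complex.I*χ/2) = 1 := by
      rw [← Complex.exp_add]
      norm_num
      rw [show -(χ/2*Complex.I) + Complex.I*χ/2 = 0 by ring, Complex.exp_zero]
    linear_combination h2 + h3
  have hcne : Complex.cos (χ/2) ≠ 0 := by
    intro h0
    rw [h0] at key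
    simp at key
    exact hne key.symm
  refine ⟨hcne, ?_⟩
  have hsq : 4 * Complex.cos (χ/2)^2 * Complex.exp (Complex.I*χ)
      = (1 + Complex.exp (Complex.I*χ))^2 := by
    have h2 : Complex.exp (Complex.I*χ/2) * Complex.exp (Complex.I*χ/2)
        = Complex.exp (Complex.I*χ) := by rw [← Complex.exp_add]; ring_nf
    calc 4 * Complex.cos (χ/2)^2 * Complex.exp (Complex.I*χ)
        = (2 * Complex.cos (χ/2) * Complex.exp (Complex.I*χ/2))^2 := by
          rw [← h2]; ring
      _ = (1 + Complex.exp (Complex.I*χ))^2 := by rw [key]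
  have hce : Complex.exp (Complex.I*χ) ≠ 0 := Complex.exp_ne_zero _
  rw [div_eq_div_iff (pow_ne_zero 2 hcne) (pow_ne_zero 2 hne)]
  linear_combination -hsq

lemma bijE : Set.BijOn (fun χ : ℂ => Complex.exp (Complex.I * χ))
    {χ : ℂ | -π < χ.re ∧ χ.re < π ∧ 0 < χ.im}
    {ρ : ℂ | ‖ρ‖ < 1 ∧ ¬∃ t : ℝ, t ≤ 0 ∧ ρ = (t : ℂ)} := by
  have hπ := Real.pi_pos
  refine ⟨?_, ?_, ?_⟩
  · rintro χ ⟨h1, h2, h3⟩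
    constructor
    · rw [Complex.norm_exp]
      have hre : (Complex.I * χ).re = -χ.im := by simp [Complex.mul_re]
      rw [hre]
      calc Real.exp (-χ.im) < Real.exp 0 := Real.exp_lt_exp.mpr (by linarith)
        _ = 1 := Real.exp_zero
    · rintro ⟨t, ht, heq⟩
      simp only at heq
      have htne : (t:ℂ) ≠ 0 := by rw [← heq]; exact Complex.exp_ne_zero _
      have ht0 : t < 0 := lt_of_le_of_ne ht (by intro h; exact htne (by rw [h]; simp))
      have hrep : (t:ℂ) = Complex.exp ((Real.log (-t) : ℝ) + π * Complex.I) := by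
        rw [Complex.exp_add, Complex.exp_pi_mul_I, ← Complex.ofReal_exp,
          Real.exp_log (by linarith)]
        push_cast; ring
      rw [hrep, Complex.exp_eq_exp_iff_exists_int] at heq
      obtain ⟨n, hn⟩ := heq
      have him := congrArg Complex.im hn
      simp [Complex.mul_im, Complex.add_im] at him
      -- him : χ.re = π + n * 2π  (roughly)
      have hn1 : (n:ℝ) < 0 := by nlinarith
      have hn2 : (-1:ℝ) < (n:ℝ) := by nlinarith
      have hni : n < 0 := by exact_mod_cast hn1
      have hni2 : (-1:ℤ) < n := by exact_mod_cast hn2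
      omega
  · rintro χ ⟨ha, hb, hc⟩ χ' ⟨ha', hb', hc'⟩ heq
    simp only at heq
    rw [Complex.exp_eq_exp_iff_exists_int] at heq
    obtain ⟨n, hn⟩ := heq
    have hχ : χ = χ' + (n:ℂ) * (2*π) := by
      apply mul_left_cancel₀ Complex.I_ne_zero
      linear_combination hn
    have hre := congrArg Complex.re hχ
    simp [Complex.add_re, Complex.mul_re] at hre
    have hn1 : (n:ℝ) < 1 := by nlinarith
    have hn2 : (-1:ℝ) < (n:ℝ) := by nlinarith
    have hni : n < 1 := by exact_mod_cast hn1
    have hni2 : (-1:ℤ) < n := by exact_mod_cast hn2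
    have hn0 : n = 0 := by omega
    rw [hχ, hn0]; push_cast; ring
  · rintro ρ ⟨hab, hnr⟩
    have hρ0 : ρ ≠ 0 := by rintro rfl; exact hnr ⟨0, le_refl 0, by simp⟩
    have habpos : 0 < ‖ρ‖ := norm_pos_iff.mpr hρ0
    have hargpi : Complex.arg ρ < π := by
      refine lt_of_le_of_ne (Complex.arg_le_pi ρ) (fun h => ?_)
      obtain ⟨hre, him⟩ := Complex.arg_eq_pi_iff.mp h
      exact hnr ⟨ρ.re, le_of_lt hre, Complex.ext (by simp) (by simp [him])⟩
    refine ⟨-Complex.I * Complex.log ρ, ⟨?_, ?_, ?_⟩, ?_⟩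
    · have : (-Complex.I * Complex.log ρ).re = Complex.arg ρ := by
        simp [Complex.mul_re, Complex.log_im]
      rw [this]; exact Complex.neg_pi_lt_arg ρ
    · have : (-Complex.I * Complex.log ρ).re = Complex.arg ρ := by
        simp [Complex.mul_re, Complex.log_im]
      rw [this]; exact hargpi
    · have : (-Complex.I * Complex.log ρ).im = -Real.log ‖ρ‖ := by
        simp [Complex.mul_im, Complex.log_re]
      rw [this]
      have := Real.log_neg habpos hab
      linarith
    · simp only
      rw [show Complex.I * (-Complex.I * Complex.log ρ) = Complex.log ρ by
        rw [← mul_assoc, mul_neg, Complex.I_mul_I, neg_neg, one_mul]]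
      exact Complex.exp_log hρ0


lemma one_add_ne (ρ : ℂ) (h : ‖ρ‖ < 1) : 1 + ρ ≠ 0 := by
  intro h0
  have h1 : ρ = -1 := by linear_combination h0
  rw [h1] at h; simp at h

lemma sq_lt (ρ : ℂ) (h : ‖ρ‖ < 1) : ρ.re^2 + ρ.im^2 < 1 := by
  have h1 := Complex.sq_norm ρ
  rw [Complex.normSq_apply] at h1
  nlinarith [norm_nonneg ρ]

lemma range_lemma (ρ : ℂ) (hab : ‖ρ‖ < 1)
    (hnr : ¬∃ t : ℝ, t ≤ 0 ∧ ρ = (t : ℂ)) (t : ℝ)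
    (ht : 4*ρ/(1+ρ)^2 = (t:ℂ)) : 0 < t ∧ t < 1 := by
  have hd := one_add_ne ρ hab
  have hsq := sq_lt ρ hab
  rw [div_eq_iff (pow_ne_zero 2 hd)] at ht
  have hre := congrArg Complex.re ht
  have him := congrArg Complex.im ht
  simp [Complex.mul_re, Complex.mul_im, Complex.add_re, Complex.add_im, pow_two] at hre him
  by_cases hb : ρ.im = 0
  · have hρ : ρ = ((ρ.re:ℝ):ℂ) := Complex.ext rfl (by simp [hb])
    have hapos : 0 < ρ.re := by
      by_contra hc; push_neg at hc; exact hnr ⟨ρ.re, hc, hρ⟩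
    rw [hb] at hre
    have ha1 : ρ.re < 1 := by nlinarith
    constructor <;> nlinarith
  · exfalso
    have h4 : t * (1 + ρ.re) = 2 := by
      have h2 : ρ.im * (4 - t * (2*(1+ρ.re))) = 0 := by linear_combination him
      rcases mul_eq_zero.mp h2 with h | h
      · exact (hb h).elim
      · linarith
    have hapos : -1 < ρ.re := by nlinarith [sq_nonneg ρ.im]
    have htpos : 0 < t := by nlinarith
    have e1 : t * ρ.re = 2 - t := by linear_combination h4
    have e2 : t * ρ.im^2 = 2 - 2*ρ.re := by
      linear_combination hre + (1+ρ.re)*h4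
    have e3 : (t*ρ.re)^2 = (2-t)^2 := by rw [e1]
    have e4 : t^2*ρ.im^2 = t*(2-2*ρ.re) := by linear_combination t*e2
    have e5 : t^2*(ρ.re^2+ρ.im^2) < t^2 := by nlinarith
    nlinarith [e1, e3, e4, e5]

lemma bijG : Set.BijOn (fun ρ : ℂ => 4 * ρ / (1 + ρ)^2)
    {ρ : ℂ | ‖ρ‖ < 1 ∧ ¬∃ t : ℝ, t ≤ 0 ∧ ρ = (t : ℂ)}
    {z : ℂ | (¬ ∃ t : ℝ, t ≤ 0 ∧ z = (t : ℂ)) ∧ (¬ ∃ t : ℝ, 1 ≤ t ∧ z = (t : ℂ))} := by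
  have hπ := Real.pi_pos
  refine ⟨?_, ?_, ?_⟩
  · rintro ρ ⟨hab, hnr⟩
    constructor
    · rintro ⟨t, ht, heq⟩
      obtain ⟨h1, h2⟩ := range_lemma ρ hab hnr t heq
      linarith
    · rintro ⟨t, ht, heq⟩
      obtain ⟨h1, h2⟩ := range_lemma ρ hab hnr t heq
      linarith
  · rintro ρ ⟨hab, hnr⟩ ρ' ⟨hab', hnr'⟩ heq
    simp only at heq
    have hd := one_add_ne ρ hab
    have hd' := one_add_ne ρ' hab'
    rw [div_eq_div_iff (pow_ne_zero 2 hd) (pow_ne_zero 2 hd')] at heq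
    have hfac : (ρ - ρ') * (1 - ρ*ρ') = 0 := by linear_combination heq/4
    rcases mul_eq_zero.mp hfac with h | h
    · linear_combination h
    · exfalso
      have h1 : ρ * ρ' = 1 := by linear_combination -h
      have h2 : ‖ρ * ρ'‖ < 1 := by
        rw [norm_mul]
        calc ‖ρ‖ * ‖ρ'‖ ≤ 1 * ‖ρ'‖ :=
              mul_le_mul_of_nonneg_right (le_of_lt hab) (norm_nonneg _)
          _ = ‖ρ'‖ := one_mul _
          _ < 1 := hab'
      rw [h1] at h2; simp at h2
  · rintro z ⟨hz0, hz1⟩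
    have hzne1 : z ≠ 1 := fun h => hz1 ⟨1, le_refl 1, by rw [h]; simp⟩
    have hw0 : 1 - z ≠ 0 := sub_ne_zero.mpr (Ne.symm hzne1)
    set s := Complex.exp (Complex.log (1 - z) / 2) with hs_def
    have hs2 : s^2 = 1 - z := by
      rw [hs_def, pow_two, ← Complex.exp_add, add_halves, Complex.exp_log hw0]
    have hwarg : Complex.arg (1 - z) < π := by
      refine lt_of_le_of_ne (Complex.arg_le_pi _) (fun h => ?_)
      obtain ⟨hre, him⟩ := Complex.arg_eq_pi_iff.mp h
      apply hz1
      refine ⟨z.re, ?_, ?_⟩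
      · have h5 : (1:ℝ) - z.re < 0 := by simpa using hre
        linarith
      · exact Complex.ext rfl (by simpa using him)
    have hwarg2 : -π < Complex.arg (1 - z) := Complex.neg_pi_lt_arg _
    have hsre : 0 < s.re := by
      rw [hs_def, Complex.exp_re]
      apply mul_pos (Real.exp_pos _)
      apply Real.cos_pos_of_mem_Ioo
      have him2 : (Complex.log (1-z) / 2).im = Complex.arg (1-z) / 2 := by
        rw [show Complex.log (1-z) / 2 = Complex.log (1-z) * (1/2 : ℂ) by ring]
        simp [Complex.mul_im, Complex.log_im]
        ring
      rw [him2]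
      constructor <;> [linarith; linarith]
    have hs1 : (1:ℂ) + s ≠ 0 := by
      intro h
      have := congrArg Complex.re h
      simp at this
      linarith
    refine ⟨(1 - s)/(1 + s), ⟨?_, ?_⟩, ?_⟩
    · rw [norm_div, div_lt_one (norm_pos_iff.mpr hs1)]
      have hlt : ‖1-s‖^2 < ‖1+s‖^2 := by
        rw [Complex.sq_norm, Complex.sq_norm, Complex.normSq_apply, Complex.normSq_apply]
        simp only [Complex.sub_re, Complex.sub_im, Complex.add_re, Complex.add_im,
          Complex.one_re, Complex.one_im]
        nlinarith
      exact lt_of_pow_lt_pow_left₀ 2 (norm_nonneg _) hlt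
    · rintro ⟨t, ht, hrt⟩
      rw [div_eq_iff hs1] at hrt
      have ht1 : t ≠ -1 := by
        intro h
        rw [h] at hrt
        push_cast at hrt
        have h2 : (2:ℂ) = 0 := by linear_combination hrt
        norm_num at h2
      have htne : ((1:ℂ) + t) ≠ 0 := by
        intro h
        apply ht1
        have := congrArg Complex.re h
        simp at this
        linarith
      have hs_eq : s = (((1-t)/(1+t) : ℝ) : ℂ) := by
        push_cast
        rw [eq_div_iff htne]
        linear_combination -hrt
      set u : ℝ := (1-t)/(1+t) with hu_def
      have hupos : 0 < u := by
        rw [hs_eq] at hsre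
        simpa using hsre
      have h1tpos : 0 < 1 + t := by
        rcases le_or_gt (1+t) 0 with h | h
        · exfalso
          rcases eq_or_lt_of_le h with h0 | h0
          · have hu0 : u = 0 := by rw [hu_def, h0, div_zero]
            linarith
          · have hu0 : u ≤ 0 := le_of_lt (div_neg_of_pos_of_neg (by linarith) h0)
            linarith
        · exact h
      have hu1 : 1 ≤ u := by
        rw [hu_def, le_div_iff₀ h1tpos]
        linarith
      apply hz0
      refine ⟨1 - u^2, by nlinarith, ?_⟩
      rw [hs_eq] at hs2
      push_cast
      linear_combination hs2
    · simp only
      have h2s : 1 + (1-s)/(1+s) = 2/(1+s) := by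
        field_simp
        norm_num
      rw [h2s]
      field_simp
      linear_combination (-4) * hs2

/-- For `χ` in the half-strip `{-π < Re χ < π, Im χ > 0}` one has
`cos(χ/2) ≠ 0` and `1/cos²(χ/2) = 4e^{iχ}/(1+e^{iχ})²`; moreover
`χ ↦ 1/cos²(χ/2)` is a bijection from the half-strip onto the
double-cut plane `ℂ ∖ ((-∞, 0] ∪ [1, +∞))`. -/
theorem stmt_7 :
    (∀ χ : ℂ, -π < χ.re → χ.re < π → 0 < χ.im →
      Complex.cos (χ / 2) ≠ 0 ∧
      1 / Complex.cos (χ / 2) ^ 2 =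
        4 * Complex.exp (Complex.I * χ) / (1 + Complex.exp (Complex.I * χ)) ^ 2) ∧
    Set.BijOn (fun χ : ℂ => 1 / Complex.cos (χ / 2) ^ 2)
      {χ : ℂ | -π < χ.re ∧ χ.re < π ∧ 0 < χ.im}
      {z : ℂ | (¬ ∃ t : ℝ, t ≤ 0 ∧ z = (t : ℂ)) ∧ (¬ ∃ t : ℝ, 1 ≤ t ∧ z = (t : ℂ))} := by
  constructor
  · intro χ _ _ h3
    exact cos_key χ h3
  · have heq : Set.EqOn (fun χ : ℂ => 1 / Complex.cos (χ / 2) ^ 2)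
        ((fun ρ : ℂ => 4 * ρ / (1 + ρ)^2) ∘ (fun χ : ℂ => Complex.exp (Complex.I * χ)))
        {χ : ℂ | -π < χ.re ∧ χ.re < π ∧ 0 < χ.im} := by
      rintro χ ⟨_, _, h3⟩
      exact (cos_key χ h3).2
    rw [heq.bijOn_iff]
    exact bijG.comp bijE
end

section
/- Model Minkowski space as M = ℝ × E, where E is a real inner product space with dim E ≥ 2 (so d ≥ 3). For any three points x₁, x₂, x₃ ∈ M, the set {y ∈ M : y is spacelike separated from each of x₁, x₂, x₃} is nonempty and path-connected. -/
open RealInnerProductSpace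

section Helpers

private lemma convg {a b d s : ℝ} (h0 : 0 ≤ s) (h1 : s ≤ 1) (ha : a < d) (hb : b < d) :
    (1 - s) * a + s * b < d := by
  have g1 := mul_le_mul_of_nonneg_left (le_max_left a b) (by linarith : (0:ℝ) ≤ 1 - s)
  have g2 := mul_le_mul_of_nonneg_left (le_max_right a b) h0
  have h2 : (1 - s) * a + s * b ≤ max a b := by nlinarith
  exact lt_of_le_of_lt h2 (max_lt ha hb)


private lemma max3_choice (A B C : ℝ) :
    max (max A B) C = A ∨ max (max A B) C = B ∨ max (max A B) C = C := by
  rcases max_choice (max A B) C with h | h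
  · rcases max_choice A B with h' | h' <;> rw [h, h'] <;> tauto
  · tauto


private lemma min3_choice (A B C : ℝ) :
    min (min A B) C = A ∨ min (min A B) C = B ∨ min (min A B) C = C := by
  rcases min_choice (min A B) C with h | h
  · rcases min_choice A B with h' | h' <;> rw [h, h'] <;> tauto
  · tauto

variable {E : Type*} [NormedAddCommGroup E] [InnerProductSpace ℝ E]

private lemma notmem_span (hdim : 2 ≤ Module.rank ℝ E) (u : E) :
    ∃ v : E, v ∉ Submodule.span ℝ {u} := by
  by_contra hc
  push_neg at hc
  have htop : (⊤ : Submodule ℝ E) ≤ Submodule.span ℝ {u} := fun v _ => hc v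
  have h1 : Module.rank ℝ E ≤ 1 := by
    have h2 := Submodule.rank_mono htop
    rw [rank_top] at h2
    have h3 := rank_span_le (R := ℝ) ({u} : Set E)
    simp [Cardinal.mk_singleton] at h3
    exact h2.trans h3
  have : (2 : Cardinal) ≤ 1 := hdim.trans h1
  norm_num at this


private lemma dir_lemma (hdim : 2 ≤ Module.rank ℝ E) (u₁ u₂ : E) :
    ∃ w : E, w ≠ 0 ∧ 0 ≤ ⟪u₁, w⟫ ∧ 0 ≤ ⟪u₂, w⟫ := by
  have hnz : ∃ v : E, v ≠ 0 := by
    obtain ⟨v, hv⟩ := notmem_span hdim 0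
    exact ⟨v, fun h => hv (by rw [h]; exact Submodule.zero_mem _)⟩
  by_cases h1 : u₁ = 0
  · by_cases h2 : u₂ = 0
    · obtain ⟨v, hv⟩ := hnz
      exact ⟨v, hv, by simp [h1], by simp [h2]⟩
    · exact ⟨u₂, h2, by simp [h1], real_inner_self_nonneg⟩
  · by_cases h2 : u₂ = 0
    · exact ⟨u₁, h1, real_inner_self_nonneg, by simp [h2]⟩
    · by_cases hw : ‖u₂‖ • u₁ + ‖u₁‖ • u₂ = 0
      · -- anti-parallel: take w orthogonal to u₁ (hence also to u₂)
        obtain ⟨v, hv⟩ := notmem_span hdim u₁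
        have hn : (0:ℝ) < ‖u₁‖ := norm_pos_iff.2 h1
        have hn2 : ‖u₁‖ ^ 2 ≠ 0 := by positivity
        set w := v - (⟪u₁, v⟫ / ‖u₁‖ ^ 2) • u₁ with hwdef
        have hperp : ⟪u₁, w⟫ = 0 := by
          rw [hwdef, inner_sub_right, real_inner_smul_right, real_inner_self_eq_norm_sq]
          field_simp
          ring
        have hu2 : ‖u₁‖ • u₂ = -(‖u₂‖ • u₁) := by
          rw [eq_neg_iff_add_eq_zero, add_comm]; exact hw
        have hperp2 : ⟪u₂, w⟫ = 0 := by
          have e1 : ‖u₁‖ * ⟪u₂, w⟫ = -(‖u₂‖ * ⟪u₁, w⟫) := by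
            rw [← real_inner_smul_left, hu2, inner_neg_left, real_inner_smul_left]
          rw [hperp] at e1
          have := mul_eq_zero.1 (by linarith : ‖u₁‖ * ⟪u₂, w⟫ = 0)
          rcases this with h | h
          · exact absurd h (by positivity)
          · exact h
        refine ⟨w, ?_, le_of_eq hperp.symm, le_of_eq hperp2.symm⟩
        intro h0
        apply hv
        have hveq : v = (⟪u₁, v⟫ / ‖u₁‖ ^ 2) • u₁ := by
          have := sub_eq_zero.1 h0; exact this
        rw [hveq]
        exact Submodule.smul_mem _ _ (Submodule.mem_span_singleton_self u₁)
      · refine ⟨‖u₂‖ • u₁ + ‖u₁‖ • u₂, hw, ?_, ?_⟩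
        · rw [inner_add_right, real_inner_smul_right, real_inner_smul_right,
            real_inner_self_eq_norm_sq]
          nlinarith [abs_le.1 (abs_real_inner_le_norm u₁ u₂), norm_nonneg u₁, norm_nonneg u₂]
        · rw [inner_add_right, real_inner_smul_right, real_inner_smul_right,
            real_inner_self_eq_norm_sq]
          nlinarith [abs_le.1 (abs_real_inner_le_norm u₂ u₁), norm_nonneg u₁, norm_nonneg u₂]

private lemma sep_lemma (c₁ c₂ y : E) (M : ℝ) (h : M < ‖y - c₁‖ + ‖y - c₂‖) :
    ∃ u : E, ∀ e : E, ‖e - c₁‖ + ‖e - c₂‖ ≤ M → ⟪u, e - y⟫ < 0 := by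
  have tri : ∀ a b d : E, ‖a - d‖ ≤ ‖a - b‖ + ‖b - d‖ := fun a b d => by
    simpa [dist_eq_norm] using dist_triangle a b d
  rcases lt_or_ge M ‖c₁ - c₂‖ with hM | hM
  · refine ⟨0, fun e he => ?_⟩
    exfalso
    have h1 : ‖c₁ - c₂‖ ≤ ‖c₁ - e‖ + ‖e - c₂‖ := tri c₁ e c₂
    rw [norm_sub_rev c₁ e] at h1
    linarith
  · have hd₁ : 0 < ‖y - c₁‖ := by
      rcases eq_or_ne y c₁ with rfl | hne
      · exfalso; rw [sub_self, norm_zero, zero_add] at h; linarith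
      · exact norm_sub_pos_iff.2 hne
    have hd₂ : 0 < ‖y - c₂‖ := by
      rcases eq_or_ne y c₂ with rfl | hne
      · exfalso; rw [sub_self, norm_zero, add_zero] at h
        rw [norm_sub_rev] at h; linarith
      · exact norm_sub_pos_iff.2 hne
    refine ⟨‖y - c₂‖ • (y - c₁) + ‖y - c₁‖ • (y - c₂), fun e he => ?_⟩
    have key : ∀ d : E, ⟪y - d, e - y⟫ ≤ ‖y - d‖ * ‖e - d‖ - ‖y - d‖ ^ 2 := by
      intro d
      have h1 : ⟪y - d, e - y⟫ = ⟪y - d, e - d⟫ - ‖y - d‖ ^ 2 := by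
        rw [show e - y = (e - d) - (y - d) by abel, inner_sub_right,
          real_inner_self_eq_norm_sq]
      rw [h1]
      have h2 : ⟪y - d, e - d⟫ ≤ ‖y - d‖ * ‖e - d‖ := real_inner_le_norm _ _
      linarith
    have k₁ := key c₁
    have k₂ := key c₂
    have expand : ⟪‖y - c₂‖ • (y - c₁) + ‖y - c₁‖ • (y - c₂), e - y⟫
        = ‖y - c₂‖ * ⟪y - c₁, e - y⟫ + ‖y - c₁‖ * ⟪y - c₂, e - y⟫ := by
      rw [inner_add_left, real_inner_smul_left, real_inner_smul_left]
    rw [expand]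
    nlinarith [mul_le_mul_of_nonneg_left k₁ hd₂.le, mul_le_mul_of_nonneg_left k₂ hd₁.le,
      mul_pos hd₁ hd₂, mul_le_mul_of_nonneg_left he (mul_pos hd₁ hd₂).le,
      mul_pos (mul_pos hd₁ hd₂) (show (0:ℝ) < ‖y - c₁‖ + ‖y - c₂‖ - M by linarith)]

private lemma collin_lemma {y c0 c1 c2 : E} (p0 : 0 < ‖y - c0‖) (p1 : 0 < ‖y - c1‖)
    (p2 : 0 < ‖y - c2‖)
    (e1 : ‖y - c0‖ + ‖y - c1‖ ≤ ‖c0 - c1‖)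
    (e2 : ‖y - c0‖ + ‖y - c2‖ ≤ ‖c0 - c2‖) :
    ‖c1 - c2‖ < ‖y - c1‖ + ‖y - c2‖ := by
  set a := c0 - y with ha
  set b := c1 - y with hb
  set cc := c2 - y with hcc
  have hna : ‖y - c0‖ = ‖a‖ := by rw [ha, norm_sub_rev]
  have hnb : ‖y - c1‖ = ‖b‖ := by rw [hb, norm_sub_rev]
  have hnc : ‖y - c2‖ = ‖cc‖ := by rw [hcc, norm_sub_rev]
  have hab : c0 - c1 = a - b := by rw [ha, hb]; abel
  have hac : c0 - c2 = a - cc := by rw [ha, hcc]; abel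
  have hbc : c1 - c2 = b - cc := by rw [hb, hcc]; abel
  rw [hna] at p0 e1 e2; rw [hnb] at p1 e1; rw [hnc] at p2 e2
  rw [hab] at e1; rw [hac] at e2; rw [hbc, hnb, hnc]
  -- equalities ‖a-b‖ = ‖a‖+‖b‖, ‖a-cc‖ = ‖a‖+‖cc‖
  have q1 : ‖a - b‖ = ‖a‖ + ‖b‖ := le_antisymm (norm_sub_le a b) e1
  have q2 : ‖a - cc‖ = ‖a‖ + ‖cc‖ := le_antisymm (norm_sub_le a cc) e2
  have iab : ⟪a, b⟫ = -(‖a‖ * ‖b‖) := by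
    have h1 := norm_sub_sq_real a b
    nlinarith [sq_nonneg (‖a - b‖ - (‖a‖ + ‖b‖))]
  have iac : ⟪a, cc⟫ = -(‖a‖ * ‖cc‖) := by
    have h1 := norm_sub_sq_real a cc
    nlinarith [sq_nonneg (‖a - cc‖ - (‖a‖ + ‖cc‖))]
  -- ‖b‖•a + ‖a‖•b = 0
  have z1 : ‖b‖ • a + ‖a‖ • b = 0 := by
    have hz : ‖‖b‖ • a + ‖a‖ • b‖ ^ 2 = 0 := by
      rw [norm_add_sq_real]
      rw [real_inner_smul_left, real_inner_smul_right, norm_smul, norm_smul]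
      simp only [Real.norm_eq_abs, abs_of_nonneg (norm_nonneg _)]
      rw [iab]; ring_nf
    have := pow_eq_zero_iff (n := 2) (by norm_num) |>.1 hz
    exact norm_eq_zero.1 this
  have z2 : ‖cc‖ • a + ‖a‖ • cc = 0 := by
    have hz : ‖‖cc‖ • a + ‖a‖ • cc‖ ^ 2 = 0 := by
      rw [norm_add_sq_real]
      rw [real_inner_smul_left, real_inner_smul_right, norm_smul, norm_smul]
      simp only [Real.norm_eq_abs, abs_of_nonneg (norm_nonneg _)]
      rw [iac]; ring_nf
    have := pow_eq_zero_iff (n := 2) (by norm_num) |>.1 hz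
    exact norm_eq_zero.1 this
  have w1 : ‖a‖ • b = -(‖b‖ • a) := by rw [eq_neg_iff_add_eq_zero, add_comm]; exact z1
  have w2 : ‖a‖ • cc = -(‖cc‖ • a) := by rw [eq_neg_iff_add_eq_zero, add_comm]; exact z2
  have ibc : ⟪b, cc⟫ = ‖b‖ * ‖cc‖ := by
    have key : ‖a‖ ^ 2 * ⟪b, cc⟫ = ‖a‖ ^ 2 * (‖b‖ * ‖cc‖) := by
      have l1 : ⟪‖a‖ • b, ‖a‖ • cc⟫ = ‖a‖ ^ 2 * ⟪b, cc⟫ := by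
        rw [real_inner_smul_left, real_inner_smul_right]; ring
      have l2 : ⟪‖a‖ • b, ‖a‖ • cc⟫ = ‖b‖ * ‖cc‖ * ‖a‖ ^ 2 := by
        rw [w1, w2, inner_neg_neg, real_inner_smul_left, real_inner_smul_right,
          real_inner_self_eq_norm_sq]; ring
      rw [l1] at l2; linarith
    have hne : (‖a‖:ℝ) ^ 2 ≠ 0 := by positivity
    exact mul_left_cancel₀ hne key
  have hfin := norm_sub_sq_real b cc
  nlinarith [norm_nonneg (b - cc), mul_pos p1 p2]

private lemma cover_lemma (t : Fin 3 → ℝ) (c : Fin 3 → E) (y : E)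
    (ht01 : t 0 ≤ t 1) (ht12 : t 1 ≤ t 2)
    (hy : ∀ i j, |t i - t j| < ‖y - c i‖ + ‖y - c j‖) :
    ∃ (a₁ b₁ : E) (M₁ : ℝ) (a₂ b₂ : E) (M₂ : ℝ),
      M₁ < ‖y - a₁‖ + ‖y - b₁‖ ∧ M₂ < ‖y - a₂‖ + ‖y - b₂‖ ∧
      ∀ z : E, M₁ < ‖z - a₁‖ + ‖z - b₁‖ → M₂ < ‖z - a₂‖ + ‖z - b₂‖ →
        ∀ i j, |t i - t j| < ‖z - c i‖ + ‖z - c j‖ := by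
  have tri : ∀ a b d : E, ‖a - d‖ ≤ ‖a - b‖ + ‖b - d‖ := fun a b d => by
    simpa [dist_eq_norm] using dist_triangle a b d
  have nrev : ∀ a b : E, ‖a - b‖ = ‖b - a‖ := fun a b => norm_sub_rev a b
  -- positivity of the three distances from y
  have p0 : 0 < ‖y - c 0‖ := by
    have h := hy 0 0; rw [sub_self, abs_zero] at h; linarith
  have p1 : 0 < ‖y - c 1‖ := by
    have h := hy 1 1; rw [sub_self, abs_zero] at h; linarith
  have p2 : 0 < ‖y - c 2‖ := by
    have h := hy 2 2; rw [sub_self, abs_zero] at h; linarith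
  -- sorted versions of the hypothesis
  have o01 : t 1 - t 0 < ‖y - c 0‖ + ‖y - c 1‖ := by
    have := hy 0 1; rw [abs_sub_lt_iff] at this; linarith
  have o02 : t 2 - t 0 < ‖y - c 0‖ + ‖y - c 2‖ := by
    have := hy 0 2; rw [abs_sub_lt_iff] at this; linarith
  have o12 : t 2 - t 1 < ‖y - c 1‖ + ‖y - c 2‖ := by
    have := hy 1 2; rw [abs_sub_lt_iff] at this; linarith
  -- final assembler
  have final : ∀ z : E, t 1 - t 0 < ‖z - c 0‖ + ‖z - c 1‖ →
      t 2 - t 0 < ‖z - c 0‖ + ‖z - c 2‖ → t 2 - t 1 < ‖z - c 1‖ + ‖z - c 2‖ →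
      0 < ‖z - c 0‖ → 0 < ‖z - c 1‖ → 0 < ‖z - c 2‖ →
      ∀ i j, |t i - t j| < ‖z - c i‖ + ‖z - c j‖ := by
    intro z h01 h02 h12 q0 q1 q2 i j
    fin_cases i <;> fin_cases j <;>
      simp only [Fin.zero_eta, Fin.mk_one, Fin.isValue,
        show (⟨2, by norm_num⟩ : Fin 3) = 2 from rfl] <;>
      rw [abs_sub_lt_iff] <;> constructor <;> linarith
  rcases le_or_gt ‖c 0 - c 1‖ (t 1 - t 0) with hc01 | hc01
  · rcases le_or_gt ‖c 0 - c 2‖ (t 2 - t 0) with hc02 | hc02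
    · -- A1
      refine ⟨c 0, c 1, t 1 - t 0, c 0, c 2, t 2 - t 0, o01, o02, fun z h₁ h₂ => ?_⟩
      have t1 := tri z (c 1) (c 0)   -- ‖z-c0‖ ≤ ‖z-c1‖ + ‖c1-c0‖
      have t2 := tri z (c 0) (c 1)
      have t3 := tri z (c 0) (c 2)
      have t4 := tri z (c 2) (c 0)
      rw [nrev (c 1) (c 0)] at t1
      rw [nrev (c 2) (c 0)] at t4
      exact final z h₁ h₂ (by linarith) (by linarith) (by linarith) (by linarith)
    · -- A2
      refine ⟨c 0, c 1, t 1 - t 0, c 2, c 2, 0, o01, by linarith, fun z h₁ h₂ => ?_⟩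
      have t1 := tri z (c 1) (c 0); rw [nrev (c 1) (c 0)] at t1
      have t2 := tri z (c 0) (c 1)
      have t3 := tri (c 0) z (c 2); rw [nrev (c 0) z] at t3
      have t4 := tri (c 1) z (c 2); rw [nrev (c 1) z] at t4
      have t5 := tri (c 0) (c 1) (c 2)
      exact final z h₁ (by linarith) (by linarith) (by linarith) (by linarith) (by linarith)
  · rcases le_or_gt ‖c 1 - c 2‖ (t 2 - t 1) with hc12 | hc12
    · rcases le_or_gt ‖c 0 - c 2‖ (t 2 - t 0) with hc02 | hc02
      · -- B1
        refine ⟨c 1, c 2, t 2 - t 1, c 0, c 2, t 2 - t 0, o12, o02, fun z h₁ h₂ => ?_⟩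
        have t1 := tri z (c 1) (c 2)  -- ‖z-c2‖ ≤ ‖z-c1‖+‖c1-c2‖
        have t2 := tri z (c 2) (c 1); rw [nrev (c 2) (c 1)] at t2
        have t3 := tri z (c 2) (c 0); rw [nrev (c 2) (c 0)] at t3
        have t4 := tri z (c 0) (c 2)
        exact final z (by linarith) h₂ h₁ (by linarith) (by linarith) (by linarith)
      · -- B2
        refine ⟨c 1, c 2, t 2 - t 1, c 0, c 0, 0, o12, by linarith, fun z h₁ h₂ => ?_⟩
        have t1 := tri z (c 1) (c 2)
        have t2 := tri z (c 2) (c 1); rw [nrev (c 2) (c 1)] at t2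
        have t3 := tri (c 0) z (c 1); rw [nrev (c 0) z] at t3
        have t4 := tri (c 0) z (c 2); rw [nrev (c 0) z] at t4
        exact final z (by linarith) (by linarith) h₁ (by linarith) (by linarith) (by linarith)
    · rcases le_or_gt ‖c 0 - c 2‖ (t 2 - t 0) with hc02 | hc02
      · -- C1
        refine ⟨c 0, c 2, t 2 - t 0, c 1, c 1, 0, o02, by linarith, fun z h₁ h₂ => ?_⟩
        have t1 := tri z (c 2) (c 0); rw [nrev (c 2) (c 0)] at t1
        have t2 := tri z (c 0) (c 2)
        have t3 := tri (c 0) z (c 1); rw [nrev (c 0) z] at t3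
        have t4 := tri (c 1) z (c 2); rw [nrev (c 1) z] at t4
        exact final z (by linarith) h₁ (by linarith) (by linarith) (by linarith) (by linarith)
      · -- C2: all three pairs spacelike; cover the three points
        have auto : ∀ z : E, t 1 - t 0 < ‖z - c 0‖ + ‖z - c 1‖ ∧
            t 2 - t 0 < ‖z - c 0‖ + ‖z - c 2‖ ∧ t 2 - t 1 < ‖z - c 1‖ + ‖z - c 2‖ := by
          intro z
          have t1 := tri (c 0) z (c 1); rw [nrev (c 0) z] at t1
          have t2 := tri (c 0) z (c 2); rw [nrev (c 0) z] at t2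
          have t3 := tri (c 1) z (c 2); rw [nrev (c 1) z] at t3
          exact ⟨by linarith, by linarith, by linarith⟩
        rcases lt_or_ge ‖c 0 - c 1‖ (‖y - c 0‖ + ‖y - c 1‖) with hy01 | hy01
        · refine ⟨c 0, c 1, ‖c 0 - c 1‖, c 2, c 2, 0, hy01, by linarith, fun z h₁ h₂ => ?_⟩
          obtain ⟨k1, k2, k3⟩ := auto z
          have t1 := tri z (c 1) (c 0); rw [nrev (c 1) (c 0)] at t1
          have t2 := tri z (c 0) (c 1)
          exact final z k1 k2 k3 (by linarith) (by linarith) (by linarith)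
        · rcases lt_or_ge ‖c 0 - c 2‖ (‖y - c 0‖ + ‖y - c 2‖) with hy02 | hy02
          · refine ⟨c 0, c 2, ‖c 0 - c 2‖, c 1, c 1, 0, hy02, by linarith, fun z h₁ h₂ => ?_⟩
            obtain ⟨k1, k2, k3⟩ := auto z
            have t1 := tri z (c 2) (c 0); rw [nrev (c 2) (c 0)] at t1
            have t2 := tri z (c 0) (c 2)
            exact final z k1 k2 k3 (by linarith) (by linarith) (by linarith)
          · have hy12 : ‖c 1 - c 2‖ < ‖y - c 1‖ + ‖y - c 2‖ :=
              collin_lemma p0 p1 p2 hy01 hy02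
            refine ⟨c 1, c 2, ‖c 1 - c 2‖, c 0, c 0, 0, hy12, by linarith, fun z h₁ h₂ => ?_⟩
            obtain ⟨k1, k2, k3⟩ := auto z
            have t1 := tri z (c 2) (c 1); rw [nrev (c 2) (c 1)] at t1
            have t2 := tri z (c 1) (c 2)
            exact final z k1 k2 k3 (by linarith) (by linarith) (by linarith)

private lemma escape_lemma (hdim : 2 ≤ Module.rank ℝ E) (t : Fin 3 → ℝ) (c : Fin 3 → E) (y : E)
    (hy : ∀ i j, |t i - t j| < ‖y - c i‖ + ‖y - c j‖) :
    ∃ w : E, w ≠ 0 ∧ ∀ ρ : ℝ, 0 ≤ ρ → ∀ i j,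
      |t i - t j| < ‖y + ρ • w - c i‖ + ‖y + ρ • w - c j‖ := by
  set σ := Tuple.sort t with hσ
  have hmono := Tuple.monotone_sort t
  have hy' : ∀ i j, |(t ∘ σ) i - (t ∘ σ) j| < ‖y - (c ∘ σ) i‖ + ‖y - (c ∘ σ) j‖ :=
    fun i j => hy (σ i) (σ j)
  obtain ⟨a₁, b₁, M₁, a₂, b₂, M₂, o₁, o₂, cov⟩ :=
    cover_lemma (t ∘ σ) (c ∘ σ) y (hmono (by decide : (0:Fin 3) ≤ 1))
      (hmono (by decide : (1:Fin 3) ≤ 2)) hy'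
  obtain ⟨u₁, hu₁⟩ := sep_lemma a₁ b₁ y M₁ o₁
  obtain ⟨u₂, hu₂⟩ := sep_lemma a₂ b₂ y M₂ o₂
  obtain ⟨w, hw0, hw1, hw2⟩ := dir_lemma hdim u₁ u₂
  refine ⟨w, hw0, fun ρ hρ i j => ?_⟩
  have hsub : y + ρ • w - y = ρ • w := by abel
  have h₁ : M₁ < ‖y + ρ • w - a₁‖ + ‖y + ρ • w - b₁‖ := by
    by_contra hcon
    push_neg at hcon
    have hh := hu₁ _ hcon
    rw [hsub, real_inner_smul_right] at hh
    nlinarith [mul_nonneg hρ hw1]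
  have h₂ : M₂ < ‖y + ρ • w - a₂‖ + ‖y + ρ • w - b₂‖ := by
    by_contra hcon
    push_neg at hcon
    have hh := hu₂ _ hcon
    rw [hsub, real_inner_smul_right] at hh
    nlinarith [mul_nonneg hρ hw2]
  have := cov (y + ρ • w) h₁ h₂ (σ.symm i) (σ.symm j)
  simpa using this

end Helpers

/-- In Minkowski space `M = ℝ × E` with `dim E ≥ 2`, for any three points the
set of points spacelike separated from all of them is nonempty and
path-connected. -/
theorem stmt_12 {E : Type*} [NormedAddCommGroup E] [InnerProductSpace ℝ E]
    (hdim : 2 ≤ Module.rank ℝ E) (x : Fin 3 → ℝ × E) :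
    ({y : ℝ × E | ∀ i, |y.1 - (x i).1| < ‖y.2 - (x i).2‖}).Nonempty ∧
    IsPathConnected {y : ℝ × E | ∀ i, |y.1 - (x i).1| < ‖y.2 - (x i).2‖} := by
  classical
  set S := {y : ℝ × E | ∀ i, |y.1 - (x i).1| < ‖y.2 - (x i).2‖} with hSdef
  have hmemS_iff : ∀ q : ℝ × E, q ∈ S ↔ ∀ i, |q.1 - (x i).1| < ‖q.2 - (x i).2‖ := by
    intro q; rw [hSdef]; rfl
  set Θ : ℝ := max (max |(x 0).1| |(x 1).1|) |(x 2).1| with hΘdef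
  set Cm : ℝ := max (max ‖(x 0).2‖ ‖(x 1).2‖) ‖(x 2).2‖ with hCdef
  have hΘ : ∀ i : Fin 3, |(x i).1| ≤ Θ := by
    intro i; rw [hΘdef]; fin_cases i
    · exact le_max_of_le_left (le_max_left _ _)
    · exact le_max_of_le_left (le_max_right _ _)
    · exact le_max_right _ _
  have hC : ∀ i : Fin 3, ‖(x i).2‖ ≤ Cm := by
    intro i; rw [hCdef]; fin_cases i
    · exact le_max_of_le_left (le_max_left _ _)
    · exact le_max_of_le_left (le_max_right _ _)
    · exact le_max_right _ _
  have hΘ0 : 0 ≤ Θ := (abs_nonneg _).trans (hΘ 0)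
  have hC0 : 0 ≤ Cm := (norm_nonneg _).trans (hC 0)
  obtain ⟨v, hv⟩ : ∃ v : E, v ≠ 0 := by
    obtain ⟨v, hv⟩ := notmem_span hdim 0
    exact ⟨v, fun h => hv (by rw [h]; exact Submodule.zero_mem _)⟩
  have hvn : (0:ℝ) < ‖v‖ := norm_pos_iff.2 hv
  set z₀ : E := ((Θ + Cm + 1) / ‖v‖) • v with hz₀def
  have hz₀ : ‖z₀‖ = Θ + Cm + 1 := by
    rw [hz₀def, norm_smul, Real.norm_eq_abs, abs_of_nonneg (by positivity),
      div_mul_cancel₀ _ (ne_of_gt hvn)]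
  have hfar : ∀ u : E, ‖u‖ = Θ + Cm + 1 → ((0:ℝ), u) ∈ S := by
    intro u hu
    rw [hmemS_iff]
    intro i
    have h1 : ‖u‖ - ‖(x i).2‖ ≤ ‖u - (x i).2‖ := norm_sub_norm_le _ _
    have h2 := hΘ i
    have h3 := hC i
    show |(0:ℝ) - (x i).1| < ‖u - (x i).2‖
    rw [zero_sub, abs_neg]
    linarith
  have hbS : ((0:ℝ), z₀) ∈ S := hfar z₀ hz₀
  have key : ∀ p : ℝ × E, p ∈ S → JoinedIn S p ((0:ℝ), z₀) := by
    rintro ⟨τ, Y⟩ hp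
    rw [hmemS_iff] at hp
    simp only [] at hp
    -- pairwise spacelike compatibility at Y
    have hpair : ∀ i j, |(x i).1 - (x j).1| <
        ‖Y - (x i).2‖ + ‖Y - (x j).2‖ := by
      intro i j
      have h1 := hp i
      have h2 := hp j
      have h4 : |(x i).1 - τ| < ‖Y - (x i).2‖ := by rw [abs_sub_comm]; exact h1
      exact lt_of_le_of_lt (abs_sub_le _ τ _) (add_lt_add h4 h2)
    obtain ⟨w, hw, hesc⟩ := escape_lemma hdim (fun i => (x i).1) (fun i => (x i).2) Y hpair
    have hwn : (0:ℝ) < ‖w‖ := norm_pos_iff.2 hw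
    -- the time corridor along the spatial ray
    set L : ℝ → ℝ := fun ρ => max (max ((x 0).1 - ‖Y + ρ • w - (x 0).2‖)
        ((x 1).1 - ‖Y + ρ • w - (x 1).2‖)) ((x 2).1 - ‖Y + ρ • w - (x 2).2‖) with hLdef
    set U : ℝ → ℝ := fun ρ => min (min ((x 0).1 + ‖Y + ρ • w - (x 0).2‖)
        ((x 1).1 + ‖Y + ρ • w - (x 1).2‖)) ((x 2).1 + ‖Y + ρ • w - (x 2).2‖) with hUdef
    set g : ℝ → ℝ := fun ρ => (L ρ + U ρ) / 2 with hgdef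
    have hLbd : ∀ ρ, ∀ i : Fin 3, (x i).1 - ‖Y + ρ • w - (x i).2‖ ≤ L ρ := by
      intro ρ i; rw [hLdef]; fin_cases i
      · exact le_max_of_le_left (le_max_left _ _)
      · exact le_max_of_le_left (le_max_right _ _)
      · exact le_max_right _ _
    have hUbd : ∀ ρ, ∀ i : Fin 3, U ρ ≤ (x i).1 + ‖Y + ρ • w - (x i).2‖ := by
      intro ρ i; rw [hUdef]; fin_cases i
      · exact min_le_of_left_le (min_le_left _ _)
      · exact min_le_of_left_le (min_le_right _ _)
      · exact min_le_right _ _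
    have hLU : ∀ ρ, 0 ≤ ρ → L ρ < U ρ := by
      intro ρ hρ
      have h9 : ∀ i j : Fin 3, (x i).1 - ‖Y + ρ • w - (x i).2‖ <
          (x j).1 + ‖Y + ρ • w - (x j).2‖ := by
        intro i j
        have h := hesc ρ hρ i j
        rw [abs_sub_lt_iff] at h
        linarith [h.1]
      rw [hLdef, hUdef]
      simp only [max_lt_iff, lt_min_iff]
      repeat' apply And.intro
      all_goals apply h9
    have hgmem : ∀ ρ, 0 ≤ ρ → ∀ i : Fin 3,
        |g ρ - (x i).1| < ‖Y + ρ • w - (x i).2‖ := by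
      intro ρ hρ i
      have h1 := hLbd ρ i
      have h2 := hUbd ρ i
      have h3 := hLU ρ hρ
      rw [hgdef]
      rw [abs_sub_lt_iff]
      constructor <;> simp only [] <;> linarith
    have hgbound : ∀ ρ, |g ρ| ≤ Θ := by
      intro ρ
      have hchoiceL : ∃ i : Fin 3, L ρ = (x i).1 - ‖Y + ρ • w - (x i).2‖ := by
        rw [hLdef]
        rcases max3_choice ((x 0).1 - ‖Y + ρ • w - (x 0).2‖)
          ((x 1).1 - ‖Y + ρ • w - (x 1).2‖) ((x 2).1 - ‖Y + ρ • w - (x 2).2‖) with h | h | h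
        · exact ⟨0, h⟩
        · exact ⟨1, h⟩
        · exact ⟨2, h⟩
      have hchoiceU : ∃ i : Fin 3, U ρ = (x i).1 + ‖Y + ρ • w - (x i).2‖ := by
        rw [hUdef]
        rcases min3_choice ((x 0).1 + ‖Y + ρ • w - (x 0).2‖)
          ((x 1).1 + ‖Y + ρ • w - (x 1).2‖) ((x 2).1 + ‖Y + ρ • w - (x 2).2‖) with h | h | h
        · exact ⟨0, h⟩
        · exact ⟨1, h⟩
        · exact ⟨2, h⟩
      obtain ⟨a, ha⟩ := hchoiceL
      obtain ⟨d, hd⟩ := hchoiceU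
      have h1 := hUbd ρ a
      have h2 := hLbd ρ d
      have h3 := abs_le.1 (hΘ a)
      have h4 := abs_le.1 (hΘ d)
      rw [hgdef, abs_le]
      constructor <;> simp only [] <;> [linarith [ha, hd, h2, h4.1]; linarith [ha, hd, h1, h3.2]]
    -- choose how far to travel
    set R : ℝ := (‖Y‖ + 2 * Θ + Cm + 1) / ‖w‖ with hRdef
    have hR0 : 0 ≤ R := by
      rw [hRdef]
      apply div_nonneg _ hwn.le
      have := norm_nonneg Y
      linarith
    have hYR : 2 * Θ + Cm + 1 ≤ ‖Y + R • w‖ := by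
      have h1 : ‖R • w‖ = R * ‖w‖ := by
        rw [norm_smul, Real.norm_eq_abs, abs_of_nonneg hR0]
      have h2 : R * ‖w‖ = ‖Y‖ + 2 * Θ + Cm + 1 := by
        rw [hRdef]; field_simp
      have h3 : ‖R • w‖ ≤ ‖Y + R • w‖ + ‖Y‖ := by
        have h4 := norm_add_le (Y + R • w) (-Y)
        simp only [norm_neg] at h4
        have h5 : Y + R • w + -Y = R • w := by abel
        rw [h5] at h4
        exact h4
      linarith
    have hYRpos : (0:ℝ) < ‖Y + R • w‖ := by linarith
    set κ : ℝ := (Θ + Cm + 1) / ‖Y + R • w‖ with hκdef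
    have hκpos : 0 < κ := by rw [hκdef]; positivity
    have hκ1 : κ ≤ 1 := by
      rw [hκdef, div_le_one hYRpos]; linarith
    have hκnorm : κ * ‖Y + R • w‖ = Θ + Cm + 1 := by
      rw [hκdef, div_mul_cancel₀ _ (ne_of_gt hYRpos)]
    -- piece 1 : from (τ, Y) to (g 0, Y)
    have piece1 : JoinedIn S (τ, Y) (g 0, Y) := by
      apply JoinedIn.ofLine (f := fun s => ((1 - s) * τ + s * g 0, Y))
      · fun_prop
      · norm_num
      · norm_num
      · rintro q ⟨s, hs, rfl⟩
        rw [hmemS_iff]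
        intro i
        show |(1 - s) * τ + s * g 0 - (x i).1| < ‖Y - (x i).2‖
        have h1 := hp i
        have h2 := hgmem 0 le_rfl i
        rw [show Y + (0:ℝ) • w - (x i).2 = Y - (x i).2 by rw [zero_smul, add_zero]] at h2
        rw [abs_sub_lt_iff] at h1 h2 ⊢
        constructor
        · rw [show (1 - s) * τ + s * g 0 - (x i).1
            = (1 - s) * (τ - (x i).1) + s * (g 0 - (x i).1) by ring]
          exact convg hs.1 hs.2 h1.1 h2.1
        · rw [show (x i).1 - ((1 - s) * τ + s * g 0)
            = (1 - s) * ((x i).1 - τ) + s * ((x i).1 - g 0) by ring]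
          exact convg hs.1 hs.2 h1.2 h2.2
    -- piece 2 : from (g 0, Y) to (g R, Y + R • w)
    have hgc : Continuous g := by
      rw [hgdef, hLdef, hUdef]; fun_prop
    have piece2 : JoinedIn S (g 0, Y) (g R, Y + R • w) := by
      apply JoinedIn.ofLine (f := fun s => (g (s * R), Y + (s * R) • w))
      · exact ((hgc.comp (continuous_id.mul continuous_const)).prodMk
          (by fun_prop)).continuousOn
      · simp
      · simp
      · rintro q ⟨s, hs, rfl⟩
        rw [hmemS_iff]
        intro i
        exact hgmem (s * R) (mul_nonneg hs.1 hR0) i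
    -- piece 3 : from (g R, Y + R • w) to (0, Y + R • w)
    have piece3 : JoinedIn S (g R, Y + R • w) ((0:ℝ), Y + R • w) := by
      apply JoinedIn.ofLine (f := fun s => ((1 - s) * g R, Y + R • w))
      · fun_prop
      · norm_num
      · norm_num
      · rintro q ⟨s, hs, rfl⟩
        rw [hmemS_iff]
        intro i
        show |(1 - s) * g R - (x i).1| < ‖Y + R • w - (x i).2‖
        have h1 := hgbound R
        have h2 : |(1 - s) * g R| ≤ |g R| := by
          rw [abs_mul, abs_of_nonneg (by linarith [hs.2] : (0:ℝ) ≤ 1 - s)]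
          nlinarith [abs_nonneg (g R), hs.1, hs.2]
        have h3 : ‖Y + R • w‖ - ‖(x i).2‖ ≤ ‖Y + R • w - (x i).2‖ := norm_sub_norm_le _ _
        have h4 : |(1 - s) * g R - (x i).1| ≤ |(1 - s) * g R| + |(x i).1| := by
          rw [sub_eq_add_neg]
          exact (abs_add_le _ _).trans (by rw [abs_neg])
        have h5 := hΘ i
        have h6 := hC i
        linarith
    -- piece 4 : radial rescale to the reference sphere
    have piece4 : JoinedIn S ((0:ℝ), Y + R • w) ((0:ℝ), κ • (Y + R • w)) := by
      apply JoinedIn.ofLine (f := fun s => ((0:ℝ), ((1 - s) + s * κ) • (Y + R • w)))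
      · fun_prop
      · norm_num
      · norm_num
      · rintro q ⟨s, hs, rfl⟩
        rw [hmemS_iff]
        intro i
        show |(0:ℝ) - (x i).1| < ‖((1 - s) + s * κ) • (Y + R • w) - (x i).2‖
        have hlk : κ ≤ (1 - s) + s * κ := by nlinarith [hs.1, hs.2]
        have hlpos : 0 < (1 - s) + s * κ := lt_of_lt_of_le hκpos hlk
        have h1 : ‖((1 - s) + s * κ) • (Y + R • w)‖ = ((1 - s) + s * κ) * ‖Y + R • w‖ := by
          rw [norm_smul, Real.norm_eq_abs, abs_of_pos hlpos]
        have h2 : κ * ‖Y + R • w‖ ≤ ((1 - s) + s * κ) * ‖Y + R • w‖ :=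
          mul_le_mul_of_nonneg_right hlk (norm_nonneg _)
        have h3 : ‖((1 - s) + s * κ) • (Y + R • w)‖ - ‖(x i).2‖
            ≤ ‖((1 - s) + s * κ) • (Y + R • w) - (x i).2‖ := norm_sub_norm_le _ _
        have h4 := hΘ i
        have h5 := hC i
        rw [zero_sub, abs_neg]
        linarith [hκnorm]
    -- piece 5 : along the sphere to the base point
    have piece5 : JoinedIn S ((0:ℝ), κ • (Y + R • w)) ((0:ℝ), z₀) := by
      have hr0 : (0:ℝ) ≤ Θ + Cm + 1 := by linarith
      have hsph : IsPathConnected (Metric.sphere (0:E) (Θ + Cm + 1)) :=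
        isPathConnected_sphere (lt_of_lt_of_le (by norm_num) hdim) 0 hr0
      have hm1 : κ • (Y + R • w) ∈ Metric.sphere (0:E) (Θ + Cm + 1) := by
        rw [mem_sphere_zero_iff_norm, norm_smul, Real.norm_eq_abs, abs_of_pos hκpos]
        exact hκnorm
      have hm2 : z₀ ∈ Metric.sphere (0:E) (Θ + Cm + 1) := by
        rw [mem_sphere_zero_iff_norm]; exact hz₀
      have hj := (hsph.joinedIn _ hm1 _ hm2).map
        (f := fun u : E => ((0:ℝ), u)) (continuous_const.prodMk continuous_id)
      apply hj.mono
      rintro q ⟨u, hu, rfl⟩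
      exact hfar u (mem_sphere_zero_iff_norm.1 hu)
    exact (((piece1.trans piece2).trans piece3).trans piece4).trans piece5
  constructor
  · exact ⟨_, hbS⟩
  · exact ⟨_, hbS, fun {q} hq => (key q hq).symm⟩
end

section
/- Model Minkowski space as M = ℝ × E, where E is a real inner product space with dim E ≥ 2 (so d ≥ 3). Let x₁, x₂, x₃ ∈ M satisfy: x₁ → x₂, x₃ spacelike separated from x₁, and x₃ spacelike separated from x₂. Then the set F = {x₄ ∈ M : x₁ → x₄, x₃ → x₄, and x₄ spacelike separated from x₂} is nonempty and path-connected. -/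
open scoped RealInnerProductSpace

private lemma real_cap_aux (a t D : ℝ) (ha : -1 ≤ a) (ha' : a ≤ 1) (ht : 0 ≤ t)
    (ht1 : t ≤ 1) (hD : 0 ≤ D)
    (hD2 : D ^ 2 = (1 - t) ^ 2 - 2 * (t * (1 - t)) * a + t ^ 2) :
    (1 - t) * a - t ≤ a * D := by
  have ht' : (0:ℝ) ≤ 1 - t := by linarith
  have htt : 0 ≤ t * (1 - t) := mul_nonneg ht ht'
  rcases le_or_gt a 0 with h | h
  · have hD1 : D ≤ 1 := by nlinarith
    nlinarith [mul_nonneg (neg_nonneg.2 h) (by linarith : (0:ℝ) ≤ 1 - D)]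
  · rcases le_or_gt ((1 - t) * a - t) 0 with hN | hN
    · nlinarith [mul_nonneg h.le hD]
    · have h2a : (0:ℝ) ≤ 2 * a * (1 - t) - t := by nlinarith
      have h1a : (0:ℝ) ≤ 1 - a ^ 2 := by nlinarith
      have key : ((1 - t) * a - t) ^ 2 ≤ (a * D) ^ 2 := by
        nlinarith [mul_nonneg (mul_nonneg ht h1a) h2a]
      nlinarith [mul_nonneg h.le hD]

private lemma cap_lemma {E : Type*} [NormedAddCommGroup E] [InnerProductSpace ℝ E]
    {u e : E} (hu : ‖u‖ = 1) (he : ‖e‖ = 1) {t : ℝ} (ht : 0 ≤ t) (ht1 : t ≤ 1) :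
    ⟪(1 - t) • u - t • e, e⟫ ≤ ⟪u, e⟫ * ‖(1 - t) • u - t • e‖ := by
  have habs : |⟪u, e⟫| ≤ 1 := by
    have := abs_real_inner_le_norm u e
    rwa [hu, he, mul_one] at this
  have hL : ⟪(1 - t) • u - t • e, e⟫ = (1 - t) * ⟪u, e⟫ - t := by
    rw [inner_sub_left, real_inner_smul_left, real_inner_smul_left,
      real_inner_self_eq_norm_sq, he]
    ring
  have hD2 : ‖(1 - t) • u - t • e‖ ^ 2 = (1 - t) ^ 2 - 2 * (t * (1 - t)) * ⟪u, e⟫ + t ^ 2 := by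
    rw [norm_sub_sq_real, real_inner_smul_left, real_inner_smul_right, norm_smul, norm_smul,
      hu, he, Real.norm_eq_abs, Real.norm_eq_abs, abs_of_nonneg ht,
      abs_of_nonneg (by linarith : (0:ℝ) ≤ 1 - t)]
    ring
  rw [hL]
  exact real_cap_aux _ t _ (neg_le_of_abs_le habs) (le_of_abs_le habs) ht ht1
    (norm_nonneg _) hD2

private lemma interp_bounds (a b t : ℝ) (ht0 : 0 ≤ t) (ht1 : t ≤ 1) :
    min a b ≤ a + t * (b - a) ∧ a + t * (b - a) ≤ max a b := by
  rcases le_total a b with h | h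
  · rw [min_eq_left h, max_eq_right h]
    constructor <;> nlinarith [mul_nonneg ht0 (sub_nonneg.2 h)]
  · rw [min_eq_right h, max_eq_left h]
    constructor <;> nlinarith [mul_nonneg ht0 (sub_nonneg.2 h)]

private lemma joinedIn_of_mem {X : Type*} [TopologicalSpace X] {F : Set X} (f : ℝ → X)
    {a b : X} (hf : Continuous f) (h0 : f 0 = a) (h1 : f 1 = b)
    (hmem : ∀ t : ℝ, 0 ≤ t → t ≤ 1 → f t ∈ F) : JoinedIn F a b :=
  JoinedIn.ofLine hf.continuousOn h0 h1 (by rintro z ⟨t, ⟨ht0, ht1⟩, rfl⟩; exact hmem t ht0 ht1)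

section Main

variable {E : Type*} [NormedAddCommGroup E] [InnerProductSpace ℝ E]

/-- The segment lemma between two "far" anchor points. -/
private lemma Qseg (x₁ x₂ x₃ : ℝ × E)
    (h23 : |x₂.1 - x₃.1| < ‖x₂.2 - x₃.2‖)
    (η η' R R' : ℝ) (hη0 : 0 < η)
    (hηε : x₁.1 + ‖x₂.2 - x₁.2‖ + η < x₂.1)
    (hηΔ : η < (x₂.1 - x₃.1) + ‖x₂.2 - x₃.2‖)
    (hη'0 : 0 < η')
    (hη'ε : x₁.1 + ‖x₂.2 - x₁.2‖ + η' < x₂.1)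
    (hη'Δ : η' < (x₂.1 - x₃.1) + ‖x₂.2 - x₃.2‖)
    (hR : ‖x₂.2 - x₃.2‖ ≤ R) (hR' : ‖x₂.2 - x₃.2‖ ≤ R') :
    JoinedIn {y : ℝ × E | y.1 - x₁.1 > ‖y.2 - x₁.2‖ ∧ y.1 - x₃.1 > ‖y.2 - x₃.2‖ ∧
        |y.1 - x₂.1| < ‖y.2 - x₂.2‖}
      (x₂.1 + R - η, x₂.2 - R • (‖x₂.2 - x₃.2‖⁻¹ • (x₂.2 - x₃.2)))
      (x₂.1 + R' - η', x₂.2 - R' • (‖x₂.2 - x₃.2‖⁻¹ • (x₂.2 - x₃.2))) := by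
  set v : E := x₂.2 - x₃.2 with hv_def
  set ρ₃ : ℝ := ‖v‖ with hρ₃_def
  have hρ₃ : 0 < ρ₃ := lt_of_le_of_lt (abs_nonneg _) h23
  set e : E := ρ₃⁻¹ • v with he_def
  have he : ‖e‖ = 1 := by
    rw [he_def, norm_smul, Real.norm_eq_abs, abs_of_pos (inv_pos.2 hρ₃), ← hρ₃_def,
      inv_mul_cancel₀ hρ₃.ne']
  have hve : v = ρ₃ • e := by
    rw [he_def, smul_smul, mul_inv_cancel₀ hρ₃.ne', one_smul]
  have hΔabs := abs_lt.1 h23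
  refine joinedIn_of_mem
    (fun t => (x₂.1 + (R + t * (R' - R)) - (η + t * (η' - η)),
      x₂.2 - (R + t * (R' - R)) • e)) ?_ ?_ ?_ ?_
  · apply Continuous.prodMk
    · fun_prop
    · exact continuous_const.sub (((continuous_const.add
        (continuous_id.mul continuous_const))).smul continuous_const)
  · show (x₂.1 + (R + 0 * (R' - R)) - (η + 0 * (η' - η)), x₂.2 - (R + 0 * (R' - R)) • e) = _
    norm_num
  · show (x₂.1 + (R + 1 * (R' - R)) - (η + 1 * (η' - η)), x₂.2 - (R + 1 * (R' - R)) • e) = _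
    have h1 : R + 1 * (R' - R) = R' := by ring
    have h2 : η + 1 * (η' - η) = η' := by ring
    rw [h1, h2]
  · intro t ht0 ht1
    set r : ℝ := R + t * (R' - R) with hr_def
    set s : ℝ := η + t * (η' - η) with hs_def
    obtain ⟨hrlo, hrhi⟩ := interp_bounds R R' t ht0 ht1
    obtain ⟨hslo, hshi⟩ := interp_bounds η η' t ht0 ht1
    rw [← hr_def] at hrlo hrhi
    rw [← hs_def] at hslo hshi
    have hminR : ρ₃ ≤ min R R' := le_min hR hR'
    have hminη : 0 < min η η' := lt_min hη0 hη'0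
    have hmaxηε : x₁.1 + ‖x₂.2 - x₁.2‖ + max η η' < x₂.1 := by
      rcases max_cases η η' with ⟨h, _⟩ | ⟨h, _⟩ <;> rw [h] <;> linarith
    have hmaxηΔ : max η η' < (x₂.1 - x₃.1) + ρ₃ := by
      rcases max_cases η η' with ⟨h, _⟩ | ⟨h, _⟩ <;> rw [h] <;> linarith
    have hrρ₃ : ρ₃ ≤ r := le_trans hminR hrlo
    have hs0 : 0 < s := lt_of_lt_of_le hminη hslo
    have hsε : x₁.1 + ‖x₂.2 - x₁.2‖ + s < x₂.1 := by linarith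
    have hsΔ : s < (x₂.1 - x₃.1) + ρ₃ := by linarith
    have hs2r : s < 2 * r := by linarith
    refine ⟨?_, ?_, ?_⟩
    · show x₂.1 + r - s - x₁.1 > ‖x₂.2 - r • e - x₁.2‖
      have h1 : x₂.2 - r • e - x₁.2 = (x₂.2 - x₁.2) - r • e := by abel
      calc ‖x₂.2 - r • e - x₁.2‖ ≤ ‖x₂.2 - x₁.2‖ + ‖r • e‖ := by
            rw [h1]; exact norm_sub_le _ _
        _ = ‖x₂.2 - x₁.2‖ + r := by
            rw [norm_smul, he, Real.norm_eq_abs, abs_of_nonneg (by linarith), mul_one]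
        _ < x₂.1 + r - s - x₁.1 := by linarith
    · show x₂.1 + r - s - x₃.1 > ‖x₂.2 - r • e - x₃.2‖
      have h1 : x₂.2 - r • e - x₃.2 = (ρ₃ - r) • e := by
        rw [sub_smul, ← hve, hv_def]; abel
      rw [h1, norm_smul, he, Real.norm_eq_abs, mul_one, abs_of_nonpos (by linarith)]
      linarith
    · show |x₂.1 + r - s - x₂.1| < ‖x₂.2 - r • e - x₂.2‖
      have h1 : x₂.2 - r • e - x₂.2 = -(r • e) := by abel
      have h2 : ‖x₂.2 - r • e - x₂.2‖ = r := by
        rw [h1, norm_neg, norm_smul, he, Real.norm_eq_abs, mul_one,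
          abs_of_nonneg (by linarith : (0:ℝ) ≤ r)]
      rw [h2, abs_lt]
      constructor <;> linarith

set_option maxHeartbeats 2000000 in
/-- From any point of the set, we can reach an anchor point. -/
private lemma joined_to_Q (x₁ x₂ x₃ : ℝ × E)
    (h12 : x₂.1 - x₁.1 > ‖x₂.2 - x₁.2‖)
    (h23 : |x₂.1 - x₃.1| < ‖x₂.2 - x₃.2‖)
    (η : ℝ) (hη0 : 0 < η)
    (hηε : x₁.1 + ‖x₂.2 - x₁.2‖ + η < x₂.1)
    (hηΔ : η < (x₂.1 - x₃.1) + ‖x₂.2 - x₃.2‖)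
    (y : ℝ × E)
    (hy : y ∈ {y : ℝ × E | y.1 - x₁.1 > ‖y.2 - x₁.2‖ ∧ y.1 - x₃.1 > ‖y.2 - x₃.2‖ ∧
        |y.1 - x₂.1| < ‖y.2 - x₂.2‖})
    (hηy : η ≤ x₂.1 - y.1 + ‖y.2 - x₂.2‖) :
    ∃ R, ‖x₂.2 - x₃.2‖ ≤ R ∧
      JoinedIn {y : ℝ × E | y.1 - x₁.1 > ‖y.2 - x₁.2‖ ∧ y.1 - x₃.1 > ‖y.2 - x₃.2‖ ∧
          |y.1 - x₂.1| < ‖y.2 - x₂.2‖}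
        y (x₂.1 + R - η, x₂.2 - R • (‖x₂.2 - x₃.2‖⁻¹ • (x₂.2 - x₃.2))) := by
  obtain ⟨hy1, hy3, hy2⟩ := hy
  set F := {y : ℝ × E | y.1 - x₁.1 > ‖y.2 - x₁.2‖ ∧ y.1 - x₃.1 > ‖y.2 - x₃.2‖ ∧
      |y.1 - x₂.1| < ‖y.2 - x₂.2‖} with hF_def
  set v : E := x₂.2 - x₃.2 with hv_def
  set ρ₃ : ℝ := ‖v‖ with hρ₃_def
  have hρ₃ : 0 < ρ₃ := lt_of_le_of_lt (abs_nonneg _) h23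
  set e : E := ρ₃⁻¹ • v with he_def
  have he : ‖e‖ = 1 := by
    rw [he_def, norm_smul, Real.norm_eq_abs, abs_of_pos (inv_pos.2 hρ₃), ← hρ₃_def,
      inv_mul_cancel₀ hρ₃.ne']
  have hve : v = ρ₃ • e := by
    rw [he_def, smul_smul, mul_inv_cancel₀ hρ₃.ne', one_smul]
  have hΔabs := abs_lt.1 h23
  have hy2' := abs_lt.1 hy2
  set ρ : ℝ := ‖y.2 - x₂.2‖ with hρ_def
  have hρ : 0 < ρ := lt_of_le_of_lt (abs_nonneg _) hy2
  set u : E := ρ⁻¹ • (y.2 - x₂.2) with hu_def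
  have hu : ‖u‖ = 1 := by
    rw [hu_def, norm_smul, Real.norm_eq_abs, abs_of_pos (inv_pos.2 hρ), ← hρ_def,
      inv_mul_cancel₀ hρ.ne']
  have hyu : y.2 - x₂.2 = ρ • u := by
    rw [hu_def, smul_smul, mul_inv_cancel₀ hρ.ne', one_smul]
  set A : ℝ := ⟪u, v⟫ with hA_def
  -- key bound: A < (x₂.1 - x₃.1) - η
  have hA1 : ρ + A ≤ ‖y.2 - x₃.2‖ := by
    have h1 : y.2 - x₃.2 = ρ • u + v := by rw [← hyu, hv_def]; abel
    have h2 : ⟪u, y.2 - x₃.2⟫ = ρ + A := by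
      rw [h1, inner_add_right, real_inner_smul_right, real_inner_self_eq_norm_sq, hu]; ring
    calc ρ + A = ⟪u, y.2 - x₃.2⟫ := h2.symm
      _ ≤ ‖u‖ * ‖y.2 - x₃.2‖ := real_inner_le_norm _ _
      _ = ‖y.2 - x₃.2‖ := by rw [hu, one_mul]
  have hAΔ : A < (x₂.1 - x₃.1) - η := by linarith
  have hue : u ≠ e := by
    intro h
    have hAe : A = ρ₃ := by
      rw [hA_def, h, hve, real_inner_smul_right, real_inner_self_eq_norm_sq, he]; ring
    have : x₂.1 - x₃.1 ≤ |x₂.1 - x₃.1| := le_abs_self _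
    linarith
  -- choose R, opaquely
  have hgap : 0 < (x₂.1 - x₃.1) - η - A := by linarith
  obtain ⟨R, hRρ, hRρ₃, hRA⟩ : ∃ R, ρ ≤ R ∧ ρ₃ ≤ R ∧
      ρ₃ ^ 2 < 2 * R * ((x₂.1 - x₃.1) - η - A) := by
    refine ⟨max (max ρ ρ₃) ((ρ₃ ^ 2 + 1) / (2 * ((x₂.1 - x₃.1) - η - A))),
      le_trans (le_max_left _ _) (le_max_left _ _),
      le_trans (le_max_right _ _) (le_max_left _ _), ?_⟩
    have h1 : (ρ₃ ^ 2 + 1) / (2 * ((x₂.1 - x₃.1) - η - A)) ≤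
        max (max ρ ρ₃) ((ρ₃ ^ 2 + 1) / (2 * ((x₂.1 - x₃.1) - η - A))) := le_max_right _ _
    have h2 := (div_le_iff₀ (by positivity)).1 h1
    nlinarith
  have hR0 : 0 < R := lt_of_lt_of_le hρ₃ hRρ₃
  have hη2ρ₃ : η < 2 * ρ₃ := by linarith
  refine ⟨R, hRρ₃, ?_⟩
  -- Piece 1 : null ray from y outward
  have j1 : JoinedIn F y (y.1 + (R - ρ), x₂.2 + R • u) := by
    refine joinedIn_of_mem (fun t => (y.1 + t * (R - ρ), y.2 + (t * (R - ρ)) • u)) ?_ ?_ ?_ ?_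
    · fun_prop
    · show (y.1 + 0 * (R - ρ), y.2 + (0 * (R - ρ)) • u) = y
      norm_num
    · show (y.1 + 1 * (R - ρ), y.2 + (1 * (R - ρ)) • u) = _
      have h1 : y.2 + (1 * (R - ρ)) • u = x₂.2 + R • u := by
        have h2 : y.2 = x₂.2 + ρ • u := by rw [← hyu]; abel
        have h3 : ρ + 1 * (R - ρ) = R := by ring
        rw [h2, add_assoc, ← add_smul, h3]
      rw [h1]
      norm_num
    · intro t ht0 ht1
      set s : ℝ := t * (R - ρ) with hs_def
      have hs0 : 0 ≤ s := mul_nonneg ht0 (by linarith)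
      refine ⟨?_, ?_, ?_⟩
      · show y.1 + s - x₁.1 > ‖y.2 + s • u - x₁.2‖
        have h1 : y.2 + s • u - x₁.2 = (y.2 - x₁.2) + s • u := by abel
        calc ‖y.2 + s • u - x₁.2‖ ≤ ‖y.2 - x₁.2‖ + ‖s • u‖ := by
              rw [h1]; exact norm_add_le _ _
          _ = ‖y.2 - x₁.2‖ + s := by
              rw [norm_smul, hu, Real.norm_eq_abs, abs_of_nonneg hs0, mul_one]
          _ < y.1 + s - x₁.1 := by linarith
      · show y.1 + s - x₃.1 > ‖y.2 + s • u - x₃.2‖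
        have h1 : y.2 + s • u - x₃.2 = (y.2 - x₃.2) + s • u := by abel
        calc ‖y.2 + s • u - x₃.2‖ ≤ ‖y.2 - x₃.2‖ + ‖s • u‖ := by
              rw [h1]; exact norm_add_le _ _
          _ = ‖y.2 - x₃.2‖ + s := by
              rw [norm_smul, hu, Real.norm_eq_abs, abs_of_nonneg hs0, mul_one]
          _ < y.1 + s - x₃.1 := by linarith
      · show |y.1 + s - x₂.1| < ‖y.2 + s • u - x₂.2‖
        have h1 : y.2 + s • u - x₂.2 = (ρ + s) • u := by rw [add_smul, ← hyu]; abel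
        have h2 : ‖y.2 + s • u - x₂.2‖ = ρ + s := by
          rw [h1, norm_smul, hu, Real.norm_eq_abs, mul_one, abs_of_nonneg (by linarith)]
        rw [h2, abs_lt]
        constructor <;> linarith
  -- Piece 2 : move up in time
  have hd0 : 0 ≤ (x₂.1 - η) - (y.1 - ρ) := by linarith
  have hqnorm : ∀ z : E, x₂.2 + R • u - z = (y.2 - z) + (R - ρ) • u := by
    intro z
    have h2 : x₂.2 = y.2 - ρ • u := by rw [← hyu]; abel
    rw [h2, sub_smul]; abel
  have j2 : JoinedIn F (y.1 + (R - ρ), x₂.2 + R • u) (x₂.1 + R - η, x₂.2 + R • u) := by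
    refine joinedIn_of_mem
      (fun t => (y.1 + (R - ρ) + t * ((x₂.1 - η) - (y.1 - ρ)), x₂.2 + R • u)) ?_ ?_ ?_ ?_
    · fun_prop
    · show (y.1 + (R - ρ) + 0 * ((x₂.1 - η) - (y.1 - ρ)), x₂.2 + R • u) = _
      norm_num
    · show (y.1 + (R - ρ) + 1 * ((x₂.1 - η) - (y.1 - ρ)), x₂.2 + R • u) = _
      have h1 : y.1 + (R - ρ) + 1 * ((x₂.1 - η) - (y.1 - ρ)) = x₂.1 + R - η := by ring
      rw [h1]
    · intro t ht0 ht1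
      set d : ℝ := (x₂.1 - η) - (y.1 - ρ) with hd_def
      have htd : t * d ≤ d := by nlinarith
      have htd0 : 0 ≤ t * d := mul_nonneg ht0 hd0
      refine ⟨?_, ?_, ?_⟩
      · show y.1 + (R - ρ) + t * d - x₁.1 > ‖x₂.2 + R • u - x₁.2‖
        calc ‖x₂.2 + R • u - x₁.2‖ = ‖(y.2 - x₁.2) + (R - ρ) • u‖ := by rw [hqnorm x₁.2]
          _ ≤ ‖y.2 - x₁.2‖ + ‖(R - ρ) • u‖ := norm_add_le _ _
          _ = ‖y.2 - x₁.2‖ + (R - ρ) := by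
              rw [norm_smul, hu, Real.norm_eq_abs, abs_of_nonneg (by linarith), mul_one]
          _ < y.1 + (R - ρ) + t * d - x₁.1 := by linarith
      · show y.1 + (R - ρ) + t * d - x₃.1 > ‖x₂.2 + R • u - x₃.2‖
        calc ‖x₂.2 + R • u - x₃.2‖ = ‖(y.2 - x₃.2) + (R - ρ) • u‖ := by rw [hqnorm x₃.2]
          _ ≤ ‖y.2 - x₃.2‖ + ‖(R - ρ) • u‖ := norm_add_le _ _
          _ = ‖y.2 - x₃.2‖ + (R - ρ) := by
              rw [norm_smul, hu, Real.norm_eq_abs, abs_of_nonneg (by linarith), mul_one]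
          _ < y.1 + (R - ρ) + t * d - x₃.1 := by linarith
      · show |y.1 + (R - ρ) + t * d - x₂.1| < ‖x₂.2 + R • u - x₂.2‖
        have h1 : x₂.2 + R • u - x₂.2 = R • u := by abel
        have h2 : ‖x₂.2 + R • u - x₂.2‖ = R := by
          rw [h1, norm_smul, hu, Real.norm_eq_abs, mul_one, abs_of_nonneg (by linarith)]
        rw [h2, abs_lt]
        constructor <;> linarith [hd_def]
  -- Piece 3 : rotate on the big sphere
  have j3 : JoinedIn F (x₂.1 + R - η, x₂.2 + R • u) (x₂.1 + R - η, x₂.2 - R • e) := by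
    have hg : ∀ t : ℝ, (1 - t) • u - t • e ≠ 0 := by
      intro t h
      have h' : (1 - t) • u = t • e := sub_eq_zero.1 h
      have hnorm : |1 - t| = |t| := by
        have := congrArg norm h'
        rw [norm_smul (1 - t) u, norm_smul t e, hu, he, mul_one, mul_one,
          Real.norm_eq_abs, Real.norm_eq_abs] at this
        exact this
      have ht : t = 1 / 2 := by
        rcases abs_eq_abs.1 hnorm with h1 | h1 <;> linarith
      rw [ht] at h'
      have h12' : (1 : ℝ) - 1 / 2 = 1 / 2 := by norm_num
      rw [h12'] at h'
      exact hue (smul_right_injective E (by norm_num : (1/2:ℝ) ≠ 0) h')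
    have hgn : ∀ t : ℝ, ‖(1 - t) • u - t • e‖ ≠ 0 := fun t => norm_ne_zero_iff.2 (hg t)
    refine joinedIn_of_mem
      (fun t => (x₂.1 + R - η,
        x₂.2 + (R * ‖(1 - t) • u - t • e‖⁻¹) • ((1 - t) • u - t • e))) ?_ ?_ ?_ ?_
    · apply continuous_const.prodMk
      have hgc : Continuous fun t : ℝ => (1 - t) • u - t • e := by fun_prop
      exact continuous_const.add
        ((continuous_const.mul (hgc.norm.inv₀ hgn)).smul hgc)
    · show (x₂.1 + R - η,
          x₂.2 + (R * ‖(1 - (0:ℝ)) • u - (0:ℝ) • e‖⁻¹) • ((1 - (0:ℝ)) • u - (0:ℝ) • e)) = _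
      have hg0 : (1 - (0:ℝ)) • u - (0:ℝ) • e = u := by norm_num
      rw [hg0, hu, inv_one, mul_one]
    · show (x₂.1 + R - η,
          x₂.2 + (R * ‖(1 - (1:ℝ)) • u - (1:ℝ) • e‖⁻¹) • ((1 - (1:ℝ)) • u - (1:ℝ) • e)) = _
      have hg1 : (1 - (1:ℝ)) • u - (1:ℝ) • e = -e := by norm_num
      rw [hg1, norm_neg, he, inv_one, mul_one, smul_neg, ← sub_eq_add_neg]
    · intro t ht0 ht1
      set g : E := (1 - t) • u - t • e with hg_def
      have hgpos : 0 < ‖g‖ := lt_of_le_of_ne (norm_nonneg _) (Ne.symm (hgn t))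
      set w : E := (R * ‖g‖⁻¹) • g with hw_def
      have hcoef : 0 ≤ R * ‖g‖⁻¹ := mul_nonneg hR0.le (inv_nonneg.2 (norm_nonneg _))
      have hwnorm : ‖w‖ = R := by
        rw [hw_def, norm_smul, Real.norm_eq_abs, abs_of_nonneg hcoef, mul_assoc,
          inv_mul_cancel₀ (hgn t), mul_one]
      refine ⟨?_, ?_, ?_⟩
      · show x₂.1 + R - η - x₁.1 > ‖x₂.2 + w - x₁.2‖
        have h1 : x₂.2 + w - x₁.2 = (x₂.2 - x₁.2) + w := by abel
        calc ‖x₂.2 + w - x₁.2‖ ≤ ‖x₂.2 - x₁.2‖ + ‖w‖ := by rw [h1]; exact norm_add_le _ _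
          _ = ‖x₂.2 - x₁.2‖ + R := by rw [hwnorm]
          _ < x₂.1 + R - η - x₁.1 := by linarith
      · show x₂.1 + R - η - x₃.1 > ‖x₂.2 + w - x₃.2‖
        have h1 : x₂.2 + w - x₃.2 = w + v := by rw [hv_def]; abel
        have hwv : ⟪w, v⟫ ≤ R * A := by
          have hcap := cap_lemma hu he ht0 ht1
          rw [← hg_def] at hcap
          have h2 : ⟪w, e⟫ ≤ R * ‖g‖⁻¹ * (⟪u, e⟫ * ‖g‖) := by
            rw [hw_def, real_inner_smul_left]
            exact mul_le_mul_of_nonneg_left hcap hcoef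
          have hgne : ‖g‖ ≠ 0 := by rw [hg_def]; exact hgn t
          have h3 : R * ‖g‖⁻¹ * (⟪u, e⟫ * ‖g‖) = R * ⟪u, e⟫ := by
            calc R * ‖g‖⁻¹ * (⟪u, e⟫ * ‖g‖) = R * ⟪u, e⟫ * (‖g‖⁻¹ * ‖g‖) := by ring
              _ = R * ⟪u, e⟫ := by rw [inv_mul_cancel₀ hgne, mul_one]
          have h4 : ⟪u, e⟫ = ρ₃⁻¹ * A := by
            rw [he_def, real_inner_smul_right, hA_def]
          have h5 : ⟪w, v⟫ = ρ₃ * ⟪w, e⟫ := by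
            rw [hve, real_inner_smul_right]
          rw [h5]
          calc ρ₃ * ⟪w, e⟫ ≤ ρ₃ * (R * ⟪u, e⟫) := by
                apply mul_le_mul_of_nonneg_left _ hρ₃.le
                rw [← h3]; exact h2
            _ = R * A := by
                rw [h4]
                calc ρ₃ * (R * (ρ₃⁻¹ * A)) = R * A * (ρ₃ * ρ₃⁻¹) := by ring
                  _ = R * A := by rw [mul_inv_cancel₀ hρ₃.ne', mul_one]
        have hB : 0 < x₂.1 + R - η - x₃.1 := by linarith
        have hsq : ‖w + v‖ ^ 2 < (x₂.1 + R - η - x₃.1) ^ 2 := by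
          rw [norm_add_sq_real]
          rw [hwnorm, ← hρ₃_def]
          nlinarith [sq_nonneg (x₂.1 - x₃.1 - η), hwv, hRA, hB]
        rw [h1]
        exact lt_of_pow_lt_pow_left₀ 2 hB.le hsq
      · show |x₂.1 + R - η - x₂.1| < ‖x₂.2 + w - x₂.2‖
        have h1 : x₂.2 + w - x₂.2 = w := by abel
        rw [h1, hwnorm, abs_lt]
        constructor <;> linarith
  exact (j1.trans j2).trans j3

end Main

/-- Fiber connectedness for causal Type 8: in Minkowski space `ℝ × E` with
`dim E ≥ 2`, if `x₁ → x₂`, `x₃` spacelike from `x₁` and from `x₂`, then the set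
of points `x₄` with `x₁ → x₄`, `x₃ → x₄`, and `x₄` spacelike from `x₂` is
nonempty and path-connected. -/
theorem stmt_13 {E : Type*} [NormedAddCommGroup E] [InnerProductSpace ℝ E]
    (hdim : 2 ≤ Module.rank ℝ E) (x₁ x₂ x₃ : ℝ × E)
    (h12 : x₂.1 - x₁.1 > ‖x₂.2 - x₁.2‖)
    (h13 : |x₁.1 - x₃.1| < ‖x₁.2 - x₃.2‖)
    (h23 : |x₂.1 - x₃.1| < ‖x₂.2 - x₃.2‖) :
    ({y : ℝ × E | y.1 - x₁.1 > ‖y.2 - x₁.2‖ ∧ y.1 - x₃.1 > ‖y.2 - x₃.2‖ ∧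
        |y.1 - x₂.1| < ‖y.2 - x₂.2‖}).Nonempty ∧
    IsPathConnected {y : ℝ × E | y.1 - x₁.1 > ‖y.2 - x₁.2‖ ∧ y.1 - x₃.1 > ‖y.2 - x₃.2‖ ∧
        |y.1 - x₂.1| < ‖y.2 - x₂.2‖} := by
  have hρ₃ : 0 < ‖x₂.2 - x₃.2‖ := lt_of_le_of_lt (abs_nonneg _) h23
  have hΔabs := abs_lt.1 h23
  have hε₁ : 0 < x₂.1 - x₁.1 - ‖x₂.2 - x₁.2‖ := by linarith
  obtain ⟨η₀, hη₀pos, hη₀ε, hη₀Δ⟩ : ∃ η₀, 0 < η₀ ∧ x₁.1 + ‖x₂.2 - x₁.2‖ + η₀ < x₂.1 ∧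
      η₀ < (x₂.1 - x₃.1) + ‖x₂.2 - x₃.2‖ := by
    refine ⟨min (x₂.1 - x₁.1 - ‖x₂.2 - x₁.2‖) ((x₂.1 - x₃.1) + ‖x₂.2 - x₃.2‖) / 2, ?_, ?_, ?_⟩
    · have h1 : 0 < (x₂.1 - x₃.1) + ‖x₂.2 - x₃.2‖ := by linarith
      have := lt_min hε₁ h1
      linarith
    · have := min_le_left (x₂.1 - x₁.1 - ‖x₂.2 - x₁.2‖) ((x₂.1 - x₃.1) + ‖x₂.2 - x₃.2‖)
      linarith
    · have h1 := min_le_right (x₂.1 - x₁.1 - ‖x₂.2 - x₁.2‖) ((x₂.1 - x₃.1) + ‖x₂.2 - x₃.2‖)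
      have h2 : 0 < (x₂.1 - x₃.1) + ‖x₂.2 - x₃.2‖ := by linarith
      linarith
  have hbase := Qseg x₁ x₂ x₃ h23 η₀ η₀ ‖x₂.2 - x₃.2‖ ‖x₂.2 - x₃.2‖ hη₀pos hη₀ε hη₀Δ
    hη₀pos hη₀ε hη₀Δ le_rfl le_rfl
  have hQ₀ := hbase.source_mem
  constructor
  · exact ⟨_, hQ₀⟩
  · rw [isPathConnected_iff]
    refine ⟨⟨_, hQ₀⟩, ?_⟩
    intro y hy z hz
    have hyc : 0 < x₂.1 - y.1 + ‖y.2 - x₂.2‖ := by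
      have := abs_lt.1 hy.2.2
      linarith
    have hzc : 0 < x₂.1 - z.1 + ‖z.2 - x₂.2‖ := by
      have := abs_lt.1 hz.2.2
      linarith
    obtain ⟨η, hηpos, hηη₀, hηy, hηz⟩ :
        ∃ η, 0 < η ∧ η ≤ η₀ ∧ η ≤ x₂.1 - y.1 + ‖y.2 - x₂.2‖ ∧
          η ≤ x₂.1 - z.1 + ‖z.2 - x₂.2‖ := by
      refine ⟨min η₀ (min (x₂.1 - y.1 + ‖y.2 - x₂.2‖) (x₂.1 - z.1 + ‖z.2 - x₂.2‖)),
        lt_min hη₀pos (lt_min hyc hzc), min_le_left _ _,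
        le_trans (min_le_right _ _) (min_le_left _ _),
        le_trans (min_le_right _ _) (min_le_right _ _)⟩
    have hηε : x₁.1 + ‖x₂.2 - x₁.2‖ + η < x₂.1 := by linarith
    have hηΔ : η < (x₂.1 - x₃.1) + ‖x₂.2 - x₃.2‖ := by linarith
    obtain ⟨R, hRρ₃, hjy⟩ := joined_to_Q x₁ x₂ x₃ h12 h23 η hηpos hηε hηΔ y hy hηy
    obtain ⟨R', hR'ρ₃, hjz⟩ := joined_to_Q x₁ x₂ x₃ h12 h23 η hηpos hηε hηΔ z hz hηz
    have hbridge := Qseg x₁ x₂ x₃ h23 η η R R' hηpos hηε hηΔ hηpos hηε hηΔ hRρ₃ hR'ρ₃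
    exact (hjy.trans hbridge).trans hjz.symm
end

section
/- Model Minkowski space as M = ℝ × E, where E is a real inner product space with dim E ≥ 2 (so d ≥ 3). Let x₁, x₂, x₃ ∈ M satisfy: x₁ and x₂ spacelike separated, x₁ → x₃, and x₂ → x₃. Then the set F = {x₄ ∈ M : x₁ → x₄, x₂ → x₄, and x₄ spacelike separated from x₃} is nonempty and path-connected. -/
private lemma combo_lt' {A A' B B' t : ℝ} (hA : A < A') (hB : B < B')
    (h0 : 0 ≤ t) (h1 : t ≤ 1) : (1-t)*A + t*B < (1-t)*A' + t*B' := by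
  rcases eq_or_lt_of_le h1 with rfl | h
  · simpa using hB
  · nlinarith

private lemma exists_orth' {E : Type*} [NormedAddCommGroup E] [InnerProductSpace ℝ E]
    (hdim : 2 ≤ Module.rank ℝ E) (a : E) :
    ∃ u : E, u ≠ 0 ∧ (inner ℝ a u : ℝ) = 0 := by
  have hnt : Nontrivial E := rank_pos_iff_nontrivial.mp (lt_of_lt_of_le (by norm_num) hdim)
  by_cases ha : a = 0
  · obtain ⟨u, hu⟩ := exists_ne (0 : E)
    exact ⟨u, hu, by simp [ha]⟩
  · set K : Submodule ℝ E := ℝ ∙ a with hK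
    have hKbot : Kᗮ ≠ ⊥ := by
      intro h
      have hKtop : K = ⊤ := Submodule.orthogonal_eq_bot_iff.mp h
      have h1 : Module.rank ℝ E ≤ 1 := by
        rw [← rank_top ℝ E, ← hKtop, hK]
        simpa using rank_span_le (R := ℝ) ({a} : Set E)
      have := hdim.trans h1
      norm_num at this
    obtain ⟨u, huK, hu⟩ := Submodule.ne_bot_iff _ |>.mp hKbot
    exact ⟨u, hu, (Submodule.mem_orthogonal K u).mp huK a (Submodule.mem_span_singleton_self a)⟩

/-- Fiber connectedness for causal Type 10: in Minkowski space `ℝ × E` with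
`dim E ≥ 2`, if `x₁` and `x₂` are spacelike separated, `x₁ → x₃` and `x₂ → x₃`,
then the set of points `x₄` with `x₁ → x₄`, `x₂ → x₄`, and `x₄` spacelike from
`x₃` is nonempty and path-connected. -/
theorem stmt_14 {E : Type*} [NormedAddCommGroup E] [InnerProductSpace ℝ E]
    (hdim : 2 ≤ Module.rank ℝ E) (x₁ x₂ x₃ : ℝ × E)
    (h12 : |x₁.1 - x₂.1| < ‖x₁.2 - x₂.2‖)
    (h13 : x₃.1 - x₁.1 > ‖x₃.2 - x₁.2‖)
    (h23 : x₃.1 - x₂.1 > ‖x₃.2 - x₂.2‖) :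
    ({y : ℝ × E | y.1 - x₁.1 > ‖y.2 - x₁.2‖ ∧ y.1 - x₂.1 > ‖y.2 - x₂.2‖ ∧
        |y.1 - x₃.1| < ‖y.2 - x₃.2‖}).Nonempty ∧
    IsPathConnected {y : ℝ × E | y.1 - x₁.1 > ‖y.2 - x₁.2‖ ∧ y.1 - x₂.1 > ‖y.2 - x₂.2‖ ∧
        |y.1 - x₃.1| < ‖y.2 - x₃.2‖} := by
  set F : Set (ℝ × E) := {y : ℝ × E | y.1 - x₁.1 > ‖y.2 - x₁.2‖ ∧ y.1 - x₂.1 > ‖y.2 - x₂.2‖ ∧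
        |y.1 - x₃.1| < ‖y.2 - x₃.2‖} with hF
  set δ : ℝ := min (x₃.1 - x₁.1 - ‖x₃.2 - x₁.2‖) (x₃.1 - x₂.1 - ‖x₃.2 - x₂.2‖) with hδdef
  have hδ : 0 < δ := lt_min (by linarith) (by linarith)
  have hδ1 : δ ≤ x₃.1 - x₁.1 - ‖x₃.2 - x₁.2‖ := min_le_left _ _
  have hδ2 : δ ≤ x₃.1 - x₂.1 - ‖x₃.2 - x₂.2‖ := min_le_right _ _
  -- membership of slice points
  have hmem : ∀ w : E, w ≠ 0 → ‖w‖ ≤ δ/2 → ((x₃.1, x₃.2 + w) : ℝ × E) ∈ F := by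
    intro w hw hwn
    have hwpos : 0 < ‖w‖ := norm_pos_iff.mpr hw
    refine ⟨?_, ?_, ?_⟩
    · show x₃.1 - x₁.1 > ‖x₃.2 + w - x₁.2‖
      have : ‖x₃.2 + w - x₁.2‖ ≤ ‖x₃.2 - x₁.2‖ + ‖w‖ := by
        rw [add_sub_right_comm]; exact norm_add_le _ _
      linarith
    · show x₃.1 - x₂.1 > ‖x₃.2 + w - x₂.2‖
      have : ‖x₃.2 + w - x₂.2‖ ≤ ‖x₃.2 - x₂.2‖ + ‖w‖ := by
        rw [add_sub_right_comm]; exact norm_add_le _ _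
      linarith
    · show |x₃.1 - x₃.1| < ‖x₃.2 + w - x₃.2‖
      simpa using hwpos
  -- joining by straight segments
  have segJ : ∀ x y : ℝ × E, segment ℝ x y ⊆ F → JoinedIn F x y := by
    intro x y hsub
    have h := ((convex_segment x y).isPathConnected ⟨x, left_mem_segment ℝ x y⟩).joinedIn
      x (left_mem_segment ℝ x y) y (right_mem_segment ℝ x y)
    exact h.mono hsub
  -- segments within the slice
  have sliceSeg : ∀ a b : E, ‖a‖ ≤ δ/2 → ‖b‖ ≤ δ/2 →
      (∀ t : ℝ, 0 ≤ t → t ≤ 1 → (1-t) • a + t • b ≠ 0) →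
      JoinedIn F (x₃.1, x₃.2 + a) (x₃.1, x₃.2 + b) := by
    intro a b ha hb hne
    apply segJ
    rw [segment_eq_image]
    rintro p ⟨t, ⟨ht0, ht1⟩, rfl⟩
    show (1-t) • ((x₃.1, x₃.2 + a) : ℝ × E) + t • ((x₃.1, x₃.2 + b) : ℝ × E) ∈ F
    have key : (1-t) • ((x₃.1, x₃.2 + a) : ℝ × E) + t • ((x₃.1, x₃.2 + b) : ℝ × E)
        = ((x₃.1, x₃.2 + ((1-t) • a + t • b)) : ℝ × E) := by
      refine Prod.ext ?_ ?_
      · simp only [Prod.fst_add, Prod.smul_fst, smul_eq_mul]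
        ring
      · simp only [Prod.snd_add, Prod.smul_snd]
        module
    rw [key]
    apply hmem _ (hne t ht0 ht1)
    calc ‖(1-t) • a + t • b‖ ≤ ‖(1-t) • a‖ + ‖t • b‖ := norm_add_le _ _
      _ = (1-t) * ‖a‖ + t * ‖b‖ := by
          rw [norm_smul, norm_smul, Real.norm_eq_abs, Real.norm_eq_abs,
            abs_of_nonneg (by linarith), abs_of_nonneg ht0]
      _ ≤ (1-t) * (δ/2) + t * (δ/2) := by
          have h1 : (1-t) * ‖a‖ ≤ (1-t) * (δ/2) := by
            apply mul_le_mul_of_nonneg_left ha; linarith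
          have h2 : t * ‖b‖ ≤ t * (δ/2) := mul_le_mul_of_nonneg_left hb ht0
          linarith
      _ = δ/2 := by ring
  -- joining any two slice points
  have sliceJoin : ∀ a b : E, a ≠ 0 → ‖a‖ ≤ δ/2 → b ≠ 0 → ‖b‖ ≤ δ/2 →
      JoinedIn F (x₃.1, x₃.2 + a) (x₃.1, x₃.2 + b) := by
    intro a b ha han hb hbn
    obtain ⟨u₀, hu₀, horth₀⟩ := exists_orth' hdim a
    -- choose sign so that ⟪u, b⟫ ≥ 0
    obtain ⟨u, hu, horth, hsign⟩ : ∃ u : E, u ≠ 0 ∧ (inner ℝ a u : ℝ) = 0 ∧ 0 ≤ (inner ℝ u b : ℝ) := by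
      rcases le_or_gt 0 (inner ℝ u₀ b : ℝ) with h | h
      · exact ⟨u₀, hu₀, horth₀, h⟩
      · refine ⟨-u₀, neg_ne_zero.mpr hu₀, by simp [horth₀], by simp [inner_neg_left]; linarith⟩
    -- rescale u to norm δ/2
    set u' : E := (δ/(2*‖u‖)) • u with hu'def
    have hunorm : 0 < ‖u‖ := norm_pos_iff.mpr hu
    have hcpos : 0 < δ/(2*‖u‖) := by positivity
    have hu' : u' ≠ 0 := smul_ne_zero (ne_of_gt hcpos) hu
    have hu'norm : ‖u'‖ = δ/2 := by
      rw [hu'def, norm_smul, Real.norm_eq_abs, abs_of_pos hcpos]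
      field_simp
    have horth' : (inner ℝ a u' : ℝ) = 0 := by rw [hu'def, inner_smul_right, horth]; ring
    have hsign' : 0 ≤ (inner ℝ u' b : ℝ) := by
      rw [hu'def, inner_smul_left]
      exact mul_nonneg hcpos.le hsign
    clear_value u'
    clear hu'def
    have j1 : JoinedIn F (x₃.1, x₃.2 + a) (x₃.1, x₃.2 + u') := by
      apply sliceSeg a u' han (le_of_eq hu'norm)
      intro t ht0 ht1 heq
      have hia : (inner ℝ u' a : ℝ) = 0 := by rw [real_inner_comm]; exact horth'
      have h1 : (1-t) * (inner ℝ u' a : ℝ) + t * ‖u'‖^2 = 0 := by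
        have h0 := congrArg (fun z => (inner ℝ u' z : ℝ)) heq
        simpa [inner_add_right, inner_smul_right, real_inner_self_eq_norm_sq] using h0
      rw [hia] at h1
      have hn : 0 < ‖u'‖^2 := by
        have := norm_pos_iff.mpr hu'
        positivity
      have ht : t = 0 := by
        rcases mul_eq_zero.mp (by linarith : t * ‖u'‖^2 = 0) with h | h
        · exact h
        · linarith
      rw [ht] at heq
      simp at heq
      exact ha heq
    have j2 : JoinedIn F (x₃.1, x₃.2 + u') (x₃.1, x₃.2 + b) := by
      apply sliceSeg u' b (le_of_eq hu'norm) hbn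
      intro t ht0 ht1 heq
      have h1 : (1-t) * ‖u'‖^2 + t * (inner ℝ u' b : ℝ) = 0 := by
        have h0 := congrArg (fun z => (inner ℝ u' z : ℝ)) heq
        simpa [inner_add_right, inner_smul_right, real_inner_self_eq_norm_sq] using h0
      have h3 : 0 ≤ t * (inner ℝ u' b : ℝ) := mul_nonneg ht0 hsign'
      have hn : 0 < ‖u'‖^2 := by
        have := norm_pos_iff.mpr hu'
        positivity
      have ht : t = 1 := by
        have h4 : (1-t) * ‖u'‖^2 = 0 := by nlinarith
        rcases mul_eq_zero.mp h4 with h | h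
        · linarith
        · linarith
      rw [ht] at heq
      simp at heq
      exact hb heq
    exact j1.trans j2
  -- the basepoint
  obtain ⟨v0, hv0, _⟩ := exists_orth' hdim 0
  set w₀ : E := (δ/(2*‖v0‖)) • v0 with hw₀def
  have hv0n : 0 < ‖v0‖ := norm_pos_iff.mpr hv0
  have hw₀ : w₀ ≠ 0 := smul_ne_zero (by positivity) hv0
  have hw₀n : ‖w₀‖ = δ/2 := by
    rw [hw₀def, norm_smul, Real.norm_eq_abs, abs_of_pos (by positivity)]
    field_simp
  have hz₀ : ((x₃.1, x₃.2 + w₀) : ℝ × E) ∈ F := hmem w₀ hw₀ (le_of_eq hw₀n)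
  -- every point of F joins to some slice point of norm δ/2
  have descend : ∀ y : ℝ × E, y ∈ F → ∃ a : E, a ≠ 0 ∧ ‖a‖ ≤ δ/2 ∧
      JoinedIn F y (x₃.1, x₃.2 + a) := by
    intro y hy
    obtain ⟨hy1, hy2, hy3⟩ := hy
    set v : E := y.2 - x₃.2 with hvdef
    set r : ℝ := ‖v‖ with hrdef
    have hr : 0 < r := lt_of_le_of_lt (abs_nonneg _) hy3
    set c : ℝ := δ/(2*r) with hcdef
    have hc : 0 < c := by positivity
    have hcr : c * r = δ/2 := by rw [hcdef]; field_simp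
    have hvne : v ≠ 0 := by
      rw [hvdef]
      exact norm_pos_iff.mp (hrdef ▸ hr)
    refine ⟨c • v, smul_ne_zero (ne_of_gt hc) hvne, ?_, ?_⟩
    · rw [norm_smul, Real.norm_eq_abs, abs_of_pos hc, ← hrdef, hcr]
    -- endpoint cone facts
    have hzc1 : ‖x₃.2 + c • v - x₁.2‖ < x₃.1 - x₁.1 := by
      calc ‖x₃.2 + c • v - x₁.2‖ = ‖(x₃.2 - x₁.2) + c • v‖ := by rw [add_sub_right_comm]
        _ ≤ ‖x₃.2 - x₁.2‖ + ‖c • v‖ := norm_add_le _ _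
        _ = ‖x₃.2 - x₁.2‖ + δ/2 := by
            rw [norm_smul, Real.norm_eq_abs, abs_of_pos hc, ← hrdef, hcr]
        _ < x₃.1 - x₁.1 := by linarith
    have hzc2 : ‖x₃.2 + c • v - x₂.2‖ < x₃.1 - x₂.1 := by
      calc ‖x₃.2 + c • v - x₂.2‖ = ‖(x₃.2 - x₂.2) + c • v‖ := by rw [add_sub_right_comm]
        _ ≤ ‖x₃.2 - x₂.2‖ + ‖c • v‖ := norm_add_le _ _
        _ = ‖x₃.2 - x₂.2‖ + δ/2 := by
            rw [norm_smul, Real.norm_eq_abs, abs_of_pos hc, ← hrdef, hcr]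
        _ < x₃.1 - x₂.1 := by linarith
    apply segJ
    rw [segment_eq_image]
    rintro p ⟨t, ⟨ht0, ht1⟩, rfl⟩
    have hfst : ((1-t) • y + t • ((x₃.1, x₃.2 + c • v) : ℝ × E)).1
        = (1-t) * y.1 + t * x₃.1 := by
      simp [Prod.fst_add, Prod.smul_fst, smul_eq_mul]
    have hsnd : ((1-t) • y + t • ((x₃.1, x₃.2 + c • v) : ℝ × E)).2
        = (1-t) • y.2 + t • (x₃.2 + c • v) := by
      simp [Prod.snd_add, Prod.smul_snd]
    have hy2eq : y.2 = x₃.2 + v := by rw [hvdef]; abel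
    refine ⟨?_, ?_, ?_⟩
    · -- forward cone of x₁
      rw [Set.mem_setOf_eq] at *
      show ((1-t) • y + t • ((x₃.1, x₃.2 + c • v) : ℝ × E)).1 - x₁.1
        > ‖((1-t) • y + t • ((x₃.1, x₃.2 + c • v) : ℝ × E)).2 - x₁.2‖
      rw [hfst, hsnd]
      have hd : (1-t) • y.2 + t • (x₃.2 + c • v) - x₁.2
          = (1-t) • (y.2 - x₁.2) + t • (x₃.2 + c • v - x₁.2) := by module
      rw [hd]
      calc ‖(1-t) • (y.2 - x₁.2) + t • (x₃.2 + c • v - x₁.2)‖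
          ≤ (1-t) * ‖y.2 - x₁.2‖ + t * ‖x₃.2 + c • v - x₁.2‖ := by
            refine (norm_add_le _ _).trans ?_
            rw [norm_smul, norm_smul, Real.norm_eq_abs, Real.norm_eq_abs,
              abs_of_nonneg (by linarith), abs_of_nonneg ht0]
        _ < (1-t) * (y.1 - x₁.1) + t * (x₃.1 - x₁.1) := combo_lt' hy1 hzc1 ht0 ht1
        _ = (1-t) * y.1 + t * x₃.1 - x₁.1 := by ring
    · -- forward cone of x₂
      show ((1-t) • y + t • ((x₃.1, x₃.2 + c • v) : ℝ × E)).1 - x₂.1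
        > ‖((1-t) • y + t • ((x₃.1, x₃.2 + c • v) : ℝ × E)).2 - x₂.2‖
      rw [hfst, hsnd]
      have hd : (1-t) • y.2 + t • (x₃.2 + c • v) - x₂.2
          = (1-t) • (y.2 - x₂.2) + t • (x₃.2 + c • v - x₂.2) := by module
      rw [hd]
      calc ‖(1-t) • (y.2 - x₂.2) + t • (x₃.2 + c • v - x₂.2)‖
          ≤ (1-t) * ‖y.2 - x₂.2‖ + t * ‖x₃.2 + c • v - x₂.2‖ := by
            refine (norm_add_le _ _).trans ?_
            rw [norm_smul, norm_smul, Real.norm_eq_abs, Real.norm_eq_abs,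
              abs_of_nonneg (by linarith), abs_of_nonneg ht0]
        _ < (1-t) * (y.1 - x₂.1) + t * (x₃.1 - x₂.1) := combo_lt' hy2 hzc2 ht0 ht1
        _ = (1-t) * y.1 + t * x₃.1 - x₂.1 := by ring
    · -- spacelike from x₃
      show |((1-t) • y + t • ((x₃.1, x₃.2 + c • v) : ℝ × E)).1 - x₃.1|
        < ‖((1-t) • y + t • ((x₃.1, x₃.2 + c • v) : ℝ × E)).2 - x₃.2‖
      rw [hfst, hsnd]
      have hd : (1-t) • y.2 + t • (x₃.2 + c • v) - x₃.2 = ((1-t) + t*c) • v := by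
        rw [hy2eq]; module
      rw [hd]
      have hcoef : 0 ≤ (1-t) + t*c := by
        have : 0 ≤ t*c := mul_nonneg ht0 hc.le
        linarith
      rw [norm_smul, Real.norm_eq_abs, abs_of_nonneg hcoef, ← hrdef]
      have htime : |(1-t) * y.1 + t * x₃.1 - x₃.1| = (1-t) * |y.1 - x₃.1| := by
        rw [show (1-t) * y.1 + t * x₃.1 - x₃.1 = (1-t) * (y.1 - x₃.1) by ring,
          abs_mul, abs_of_nonneg (by linarith)]
      rw [htime]
      have := combo_lt' hy3 (by positivity : (0:ℝ) < δ/2) ht0 ht1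
      calc (1-t) * |y.1 - x₃.1| = (1-t) * |y.1 - x₃.1| + t * 0 := by ring
        _ < (1-t) * r + t * (δ/2) := this
        _ = ((1-t) + t*c) * r := by rw [← hcr]; ring
  constructor
  · exact ⟨_, hz₀⟩
  · refine ⟨(x₃.1, x₃.2 + w₀), hz₀, ?_⟩
    intro y hy
    obtain ⟨a, ha, han, hj⟩ := descend y hy
    exact ((hj.trans (sliceJoin a w₀ ha han hw₀ (le_of_eq hw₀n))).symm)
end

section
/- Let x₁, …, xₙ be points in two-dimensional Minkowski space M = ℝ × ℝ, x_k = (t_k, 𝐱_k), which are pairwise spacelike separated. Then there exists a permutation σ of {1, …, n} such that both lightcone coordinates w_k = 𝐱_{σ(k)} + t_{σ(k)} and w̄_k = 𝐱_{σ(k)} − t_{σ(k)} are strictly increasing in k; consequently, for all λ₁, …, λ_{n−1} ≥ 0 not all zero, the vector Σ_{k=1}^{n−1} λ_k (x_{σ(k+1)} − x_{σ(k)}) is nonzero and spacelike. -/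
/-- In 2d Minkowski space, any family of pairwise spacelike separated points can
be permuted so that both lightcone coordinates `w = 𝐱 + t` and `w̄ = 𝐱 - t` are
strictly increasing; consequently every nonzero nonnegative combination of the
consecutive differences is a nonzero spacelike vector. -/
theorem stmt_15 (n : ℕ) (x : Fin (n + 1) → ℝ × ℝ)
    (hsp : ∀ i j, i ≠ j → |(x i).1 - (x j).1| < |(x i).2 - (x j).2|) :
    ∃ σ : Equiv.Perm (Fin (n + 1)),
      StrictMono (fun k => (x (σ k)).2 + (x (σ k)).1) ∧
      StrictMono (fun k => (x (σ k)).2 - (x (σ k)).1) ∧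
      ∀ l : Fin n → ℝ, (∀ k, 0 ≤ l k) → (∃ k, l k ≠ 0) →
        (∑ k, l k • (x (σ k.succ) - x (σ k.castSucc))) ≠ 0 ∧
        |(∑ k, l k • (x (σ k.succ) - x (σ k.castSucc))).1| <
          |(∑ k, l k • (x (σ k.succ) - x (σ k.castSucc))).2| := by
  set f : Fin (n + 1) → ℝ := fun i => (x i).2 with hfdef
  have hinj : Function.Injective f := by
    intro i j h
    by_contra hne
    have h2 := hsp i j hne
    have : f i - f j = 0 := by rw [h]; ring
    simp only [hfdef] at this
    rw [show (x i).2 - (x j).2 = 0 from this, abs_zero] at h2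
    exact absurd h2 (not_lt.mpr (abs_nonneg _))
  refine ⟨Tuple.sort f, ?_⟩
  set σ := Tuple.sort f with hσ
  have hmono : StrictMono (f ∘ σ) :=
    (Tuple.monotone_sort f).strictMono_of_injective (hinj.comp σ.injective)
  have key : ∀ i j : Fin (n + 1), i < j →
      |(x (σ i)).1 - (x (σ j)).1| < (x (σ j)).2 - (x (σ i)).2 := by
    intro i j hij
    have h2 : f (σ i) < f (σ j) := hmono hij
    have hne : σ i ≠ σ j := fun h => absurd (congrArg f h) (ne_of_lt h2)
    have h3 := hsp (σ i) (σ j) hne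
    have h2' : (x (σ i)).2 < (x (σ j)).2 := h2
    rwa [abs_sub_comm (x (σ i)).2 (x (σ j)).2, abs_of_pos (sub_pos.mpr h2')] at h3
  have hwd : ∀ i j : Fin (n + 1), i < j →
      (x (σ i)).2 + (x (σ i)).1 < (x (σ j)).2 + (x (σ j)).1 := by
    intro i j hij
    have := abs_lt.mp (key i j hij)
    linarith [this.1, this.2]
  have hwbd : ∀ i j : Fin (n + 1), i < j →
      (x (σ i)).2 - (x (σ i)).1 < (x (σ j)).2 - (x (σ j)).1 := by
    intro i j hij
    have := abs_lt.mp (key i j hij)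
    linarith [this.1, this.2]
  have hw : StrictMono (fun k => (x (σ k)).2 + (x (σ k)).1) := by
    intro i j hij
    exact hwd i j hij
  have hwb : StrictMono (fun k => (x (σ k)).2 - (x (σ k)).1) := by
    intro i j hij
    exact hwbd i j hij
  refine ⟨hw, hwb, ?_⟩
  intro l hl ⟨k0, hk0⟩
  set S : ℝ × ℝ := ∑ k, l k • (x (σ k.succ) - x (σ k.castSucc)) with hS
  have hS1 : S.1 = ∑ k, l k * ((x (σ k.succ)).1 - (x (σ k.castSucc)).1) := by
    rw [hS, Prod.fst_sum]
    simp [Prod.smul_def]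
  have hS2 : S.2 = ∑ k, l k * ((x (σ k.succ)).2 - (x (σ k.castSucc)).2) := by
    rw [hS, Prod.snd_sum]
    simp [Prod.smul_def]
  have hterm : ∀ k : Fin n, (k : Fin n).castSucc < k.succ := fun k => Fin.castSucc_lt_succ (i := k)
  have hpos1 : 0 < S.2 + S.1 := by
    have : S.2 + S.1 = ∑ k, l k * (((x (σ k.succ)).2 + (x (σ k.succ)).1)
        - ((x (σ k.castSucc)).2 + (x (σ k.castSucc)).1)) := by
      rw [hS1, hS2, ← Finset.sum_add_distrib]
      congr 1; funext k; ring
    rw [this]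
    apply Finset.sum_pos'
    · intro k _
      have h2 := hwd _ _ (hterm k)
      exact mul_nonneg (hl k) (by linarith)
    · refine ⟨k0, Finset.mem_univ _, ?_⟩
      have h1 : 0 < l k0 := lt_of_le_of_ne (hl k0) (Ne.symm hk0)
      have h2 := hwd _ _ (hterm k0)
      nlinarith
  have hpos2 : 0 < S.2 - S.1 := by
    have : S.2 - S.1 = ∑ k, l k * (((x (σ k.succ)).2 - (x (σ k.succ)).1)
        - ((x (σ k.castSucc)).2 - (x (σ k.castSucc)).1)) := by
      rw [hS1, hS2, ← Finset.sum_sub_distrib]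
      congr 1; funext k; ring
    rw [this]
    apply Finset.sum_pos'
    · intro k _
      have h2 := hwbd _ _ (hterm k)
      exact mul_nonneg (hl k) (by linarith)
    · refine ⟨k0, Finset.mem_univ _, ?_⟩
      have h1 : 0 < l k0 := lt_of_le_of_ne (hl k0) (Ne.symm hk0)
      have h2 := hwbd _ _ (hterm k0)
      nlinarith
  have hS2pos : 0 < S.2 := by linarith
  constructor
  · intro h
    rw [show S = 0 from h] at hS2pos
    simp at hS2pos
  · rw [abs_of_pos hS2pos, abs_lt]
    constructor <;> linarith
end

section
/- Model Minkowski space as M = ℝ × E, where E is a real inner product space. Let x₁, x₂, x₃ ∈ M be pairwise spacelike separated. Then there exists a permutation σ of {1, 2, 3} such that for all λ₁, λ₂ ≥ 0 with (λ₁, λ₂) ≠ (0, 0), the vector λ₁ (x_{σ(2)} − x_{σ(1)}) + λ₂ (x_{σ(3)} − x_{σ(2)}) is nonzero and spacelike. -/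
lemma jost_pair {E : Type*} [NormedAddCommGroup E] [InnerProductSpace ℝ E]
    (a b : ℝ × E) (ha : |a.1| < ‖a.2‖) (hb : |b.1| < ‖b.2‖)
    (hC : 0 ≤ (inner ℝ a.2 b.2 : ℝ) - a.1 * b.1 ∨
      ((inner ℝ a.2 b.2 : ℝ) - a.1 * b.1) ^ 2 < (‖a.2‖ ^ 2 - a.1 ^ 2) * (‖b.2‖ ^ 2 - b.1 ^ 2))
    (l₁ l₂ : ℝ) (h1 : 0 ≤ l₁) (h2 : 0 ≤ l₂) (hne : (l₁, l₂) ≠ (0, 0)) :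
    l₁ • a + l₂ • b ≠ 0 ∧ |(l₁ • a + l₂ • b).1| < ‖(l₁ • a + l₂ • b).2‖ := by
  have hpos : 0 < l₁ ∨ 0 < l₂ := by
    rcases h1.lt_or_eq with h | h
    · exact Or.inl h
    rcases h2.lt_or_eq with h' | h'
    · exact Or.inr h'
    · exact absurd (by rw [← h, ← h']) hne
  have hfst : (l₁ • a + l₂ • b).1 = l₁ * a.1 + l₂ * b.1 := rfl
  have hsnd : (l₁ • a + l₂ • b).2 = l₁ • a.2 + l₂ • b.2 := rfl
  have hnorm : ‖l₁ • a.2 + l₂ • b.2‖ ^ 2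
      = l₁ ^ 2 * ‖a.2‖ ^ 2 + 2 * (l₁ * l₂) * (inner ℝ a.2 b.2 : ℝ) + l₂ ^ 2 * ‖b.2‖ ^ 2 := by
    rw [norm_add_sq_real]
    rw [norm_smul, norm_smul, real_inner_smul_left, real_inner_smul_right]
    simp [abs_of_nonneg h1, abs_of_nonneg h2]
    ring
  have hA : a.1 ^ 2 < ‖a.2‖ ^ 2 := by nlinarith [abs_nonneg a.1, sq_abs a.1]
  have hB : b.1 ^ 2 < ‖b.2‖ ^ 2 := by nlinarith [abs_nonneg b.1, sq_abs b.1]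
  have hlt : (l₁ * a.1 + l₂ * b.1) ^ 2 < ‖l₁ • a.2 + l₂ • b.2‖ ^ 2 := by
    rw [hnorm]
    rcases hC with hC | hC
    · rcases hpos with hl | hl
      · nlinarith [mul_nonneg (mul_nonneg h1 h2) hC, sq_nonneg l₂, mul_pos hl hl,
          mul_nonneg (mul_nonneg h2 h2) (by linarith : (0:ℝ) ≤ ‖b.2‖ ^ 2 - b.1 ^ 2)]
      · nlinarith [mul_nonneg (mul_nonneg h1 h2) hC, sq_nonneg l₁, mul_pos hl hl,
          mul_nonneg (mul_nonneg h1 h1) (by linarith : (0:ℝ) ≤ ‖a.2‖ ^ 2 - a.1 ^ 2)]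
    · rcases h2.lt_or_eq with hl | hl
      · nlinarith [sq_nonneg (l₁ * (‖a.2‖ ^ 2 - a.1 ^ 2) + l₂ * ((inner ℝ a.2 b.2 : ℝ) - a.1 * b.1)),
          mul_pos hl hl, sq_nonneg l₁, mul_nonneg h1 h2]
      · rcases hpos with hl1 | hl1
        · rw [← hl]
          nlinarith [mul_pos hl1 hl1]
        · exfalso; rw [← hl] at hl1; exact lt_irrefl _ hl1
  have hmain : |(l₁ • a + l₂ • b).1| < ‖(l₁ • a + l₂ • b).2‖ := by
    rw [hfst, hsnd]
    have := hlt
    refine lt_of_pow_lt_pow_left₀ 2 (norm_nonneg _) ?_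
    rwa [sq_abs]
  refine ⟨?_, hmain⟩
  intro h
  rw [h] at hmain
  simp at hmain

/-- Any totally spacelike three-point configuration in Minkowski space
`ℝ × E` becomes, after a suitable permutation, a Jost configuration: every
nonzero nonnegative combination of the consecutive differences is a nonzero
spacelike vector. -/
theorem stmt_16 {E : Type*} [NormedAddCommGroup E] [InnerProductSpace ℝ E]
    (x : Fin 3 → ℝ × E)
    (hsp : ∀ i j, i ≠ j → |(x i).1 - (x j).1| < ‖(x i).2 - (x j).2‖) :
    ∃ σ : Equiv.Perm (Fin 3), ∀ l₁ l₂ : ℝ, 0 ≤ l₁ → 0 ≤ l₂ → (l₁, l₂) ≠ (0, 0) →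
      l₁ • (x (σ 1) - x (σ 0)) + l₂ • (x (σ 2) - x (σ 1)) ≠ 0 ∧
      |(l₁ • (x (σ 1) - x (σ 0)) + l₂ • (x (σ 2) - x (σ 1))).1| <
        ‖(l₁ • (x (σ 1) - x (σ 0)) + l₂ • (x (σ 2) - x (σ 1))).2‖ := by
  set u : ℝ × E := x 1 - x 0 with hu
  set v : ℝ × E := x 2 - x 1 with hv
  have hsub : ∀ i j : Fin 3, (x i - x j).1 = (x i).1 - (x j).1 ∧ (x i - x j).2 = (x i).2 - (x j).2 :=
    fun i j => ⟨rfl, rfl⟩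
  have hA : |u.1| < ‖u.2‖ := hsp 1 0 (by decide)
  have hB : |v.1| < ‖v.2‖ := hsp 2 1 (by decide)
  have hW : |(u + v).1| < ‖(u + v).2‖ := by
    have h02 : |(x 2 - x 0).1| < ‖(x 2 - x 0).2‖ := hsp 2 0 (by decide)
    have : u + v = x 2 - x 0 := by rw [hu, hv]; abel
    rw [this]; exact h02
  set C : ℝ := (inner ℝ u.2 v.2 : ℝ) - u.1 * v.1 with hCdef
  set A : ℝ := ‖u.2‖ ^ 2 - u.1 ^ 2 with hAdef
  set B : ℝ := ‖v.2‖ ^ 2 - v.1 ^ 2 with hBdef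
  have hApos : 0 < A := by nlinarith [abs_nonneg u.1, sq_abs u.1]
  have hBpos : 0 < B := by nlinarith [abs_nonneg v.1, sq_abs v.1]
  by_cases hc1 : 0 ≤ C ∨ C ^ 2 < A * B
  · refine ⟨Equiv.refl _, fun l₁ l₂ p1 p2 pne => ?_⟩
    have := jost_pair u v hA hB hc1 l₁ l₂ p1 p2 pne
    simpa [hu, hv] using this
  · push_neg at hc1
    obtain ⟨hCneg, hdisc⟩ := hc1
    have hcase : C ≤ -A ∨ C ≤ -B := by
      by_contra h
      push_neg at h
      nlinarith [h.1, h.2]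
    rcases hcase with hca | hcb
    · -- use ordering x1, x0, x2 : σ = swap 0 1, pair (-u, u+v)
      refine ⟨Equiv.swap 0 1, fun l₁ l₂ p1 p2 pne => ?_⟩
      have ha' : |(-u).1| < ‖(-u).2‖ := by
        simpa using hA
      have hcond : 0 ≤ (inner ℝ (-u).2 (u + v).2 : ℝ) - (-u).1 * (u + v).1 := by
        have : (inner ℝ (-u).2 (u + v).2 : ℝ) - (-u).1 * (u + v).1 = -(A + C) := by
          simp [hCdef, hAdef, inner_neg_left, inner_add_right, real_inner_self_eq_norm_sq,
            Prod.fst_neg, Prod.snd_neg, Prod.fst_add, Prod.snd_add]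
          ring
        rw [this]; linarith
      have := jost_pair (-u) (u + v) ha' hW (Or.inl hcond) l₁ l₂ p1 p2 pne
      have he0 : (Equiv.swap (0 : Fin 3) 1) 0 = 1 := Equiv.swap_apply_left 0 1
      have he1 : (Equiv.swap (0 : Fin 3) 1) 1 = 0 := Equiv.swap_apply_right 0 1
      have he2 : (Equiv.swap (0 : Fin 3) 1) 2 = 2 := by decide
      rw [he0, he1, he2]
      have hd1 : x 0 - x 1 = -u := by rw [hu]; abel
      have hd2 : x 2 - x 0 = u + v := by rw [hu, hv]; abel
      rw [hd1, hd2]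
      exact this
    · -- use ordering x0, x2, x1 : σ = swap 1 2, pair (u+v, -v)
      refine ⟨Equiv.swap 1 2, fun l₁ l₂ p1 p2 pne => ?_⟩
      have hb' : |(-v).1| < ‖(-v).2‖ := by simpa using hB
      have hcond : 0 ≤ (inner ℝ (u + v).2 (-v).2 : ℝ) - (u + v).1 * (-v).1 := by
        have : (inner ℝ (u + v).2 (-v).2 : ℝ) - (u + v).1 * (-v).1 = -(C + B) := by
          simp [hCdef, hBdef, inner_neg_right, inner_add_left, real_inner_self_eq_norm_sq,
            Prod.fst_neg, Prod.snd_neg, Prod.fst_add, Prod.snd_add]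
          ring
        rw [this]; linarith
      have := jost_pair (u + v) (-v) hW hb' (Or.inl hcond) l₁ l₂ p1 p2 pne
      have he0 : (Equiv.swap (1 : Fin 3) 2) 0 = 0 := by decide
      have he1 : (Equiv.swap (1 : Fin 3) 2) 1 = 2 := Equiv.swap_apply_left 1 2
      have he2 : (Equiv.swap (1 : Fin 3) 2) 2 = 1 := Equiv.swap_apply_right 1 2
      rw [he0, he1, he2]
      have hd1 : x 2 - x 0 = u + v := by rw [hu, hv]; abel
      have hd2 : x 1 - x 2 = -v := by rw [hv]; abel
      rw [hd1, hd2]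
      exact this
end

section
/- Let R be a commutative ring, V an R-module, and B : V × V → R a symmetric bilinear form with associated quadratic values Q(x) = B(x, x). Fix b ∈ V and set σ(x) = 1 − 2 B(b, x) + Q(b) Q(x). Suppose x, y ∈ V are such that σ(x) and σ(y) are invertible in R, and define x′ = σ(x)⁻¹ • (x − Q(x) • b) and y′ = σ(y)⁻¹ • (y − Q(y) • b). Then Q(x′ − y′) = σ(x)⁻¹ σ(y)⁻¹ Q(x − y). -/
/-- Transformation law of squared separations under a special conformal
transformation with parameter `b` for a symmetric bilinear form `B` over a
commutative ring: with `σ(x) = 1 - 2B(b,x) + Q(b)Q(x)` invertible and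
`x' = σ(x)⁻¹ • (x - Q(x) • b)`, one has
`Q(x' - y') = σ(x)⁻¹ σ(y)⁻¹ Q(x - y)`. -/
theorem stmt_17 {R : Type*} [CommRing R] {V : Type*} [AddCommGroup V] [Module R V]
    (B : V →ₗ[R] V →ₗ[R] R) (hB : ∀ u w : V, B u w = B w u)
    (b x y : V) (sx sy : R)
    (hsx : sx = 1 - 2 * B b x + B b b * B x x)
    (hsy : sy = 1 - 2 * B b y + B b b * B y y)
    [Invertible sx] [Invertible sy] :
    B (⅟sx • (x - B x x • b) - ⅟sy • (y - B y y • b))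
      (⅟sx • (x - B x x • b) - ⅟sy • (y - B y y • b))
      = ⅟sx * ⅟sy * B (x - y) (x - y) := by
  have hx : ⅟sx * sx = 1 := invOf_mul_self sx
  have hy : ⅟sy * sy = 1 := invOf_mul_self sy
  simp only [map_sub, map_smul, LinearMap.sub_apply, LinearMap.smul_apply, smul_eq_mul]
  rw [hB x b, hB y b, hB y x]
  subst hsx hsy
  linear_combination (⅟(1 - 2 * B b x + B b b * B x x) * B x x
      - ⅟(1 - 2 * B b y + B b b * B y y) * B y y) * (hx - hy)
end

section
/- Let Δ > 0 be real and let r, s ∈ [0, 1] with r = 1 or s = 1. Then the family of nonnegative real numbers indexed by (m, n) ∈ ℕ × ℕ with terms (1 + (−1)^{m+n}) · Γ(Δ+m) Γ(Δ+n) / (m! · n! · Γ(Δ)²) · r^m s^n is not summable (the double series diverges). -/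
private lemma gfp_pos (Δ : ℝ) (hΔ : 0 < Δ) (m : ℕ) :
    0 < Real.Gamma (Δ + m) / (m.factorial * Real.Gamma Δ) := by
  apply div_pos (Real.Gamma_pos_of_pos (by positivity))
  exact mul_pos (by exact_mod_cast m.factorial_pos) (Real.Gamma_pos_of_pos hΔ)

private lemma gfp_rec (Δ : ℝ) (hΔ : 0 < Δ) (m : ℕ) :
    Real.Gamma (Δ + (m+1 : ℕ)) / ((m+1).factorial * Real.Gamma Δ)
      = (Real.Gamma (Δ + m) / (m.factorial * Real.Gamma Δ)) * ((Δ + m) / (m + 1)) := by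
  have h1 : (Δ + ((m:ℕ)+1 : ℕ) : ℝ) = (Δ + m) + 1 := by push_cast; ring
  rw [h1, Real.Gamma_add_one (by positivity), Nat.factorial_succ]
  have hm : (m.factorial : ℝ) ≠ 0 := by exact_mod_cast m.factorial_pos.ne'
  have hg : Real.Gamma Δ ≠ 0 := (Real.Gamma_pos_of_pos hΔ).ne'
  have : ((m:ℝ) + 1) ≠ 0 := by positivity
  field_simp
  push_cast
  ring

private lemma gfp_lb (Δ : ℝ) (hΔ : 0 < Δ) :
    ∀ m : ℕ, 1 ≤ m → Δ / m ≤ Real.Gamma (Δ + m) / (m.factorial * Real.Gamma Δ) := by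
  intro m hm
  induction m with
  | zero => omega
  | succ n ih =>
    rcases Nat.eq_or_lt_of_le hm with h1 | h1
    · have : n = 0 := by omega
      subst this
      have : Real.Gamma (Δ + (1:ℕ)) = Δ * Real.Gamma Δ := by
        norm_num [Real.Gamma_add_one hΔ.ne']
      rw [this]
      have hg : Real.Gamma Δ ≠ 0 := (Real.Gamma_pos_of_pos hΔ).ne'
      norm_num
      rw [mul_div_assoc, div_self hg, mul_one]
    · have hn : 1 ≤ n := by omega
      have hih := ih hn
      rw [gfp_rec Δ hΔ n]
      have hpos : (0:ℝ) < n := by exact_mod_cast hn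
      have h2 : Δ / n * ((Δ + n) / (n+1)) ≤
          Real.Gamma (Δ + n) / (n.factorial * Real.Gamma Δ) * ((Δ + n) / (n+1)) := by
        apply mul_le_mul_of_nonneg_right hih
        positivity
      refine le_trans ?_ h2
      rw [div_mul_div_comm, div_le_div_iff₀ (by positivity) (by positivity)]
      push_cast
      nlinarith [mul_pos (mul_pos hΔ hΔ) (by linarith : (0:ℝ) < (n:ℝ)+1)]

private lemma gfp_not_summable (Δ : ℝ) (hΔ : 0 < Δ) :
    ¬ Summable (fun k : ℕ =>
      2 * (Real.Gamma (Δ + (2*k : ℕ)) / ((2*k).factorial * Real.Gamma Δ))) := by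
  intro hsum
  apply Real.not_summable_one_div_natCast
  apply Summable.of_nonneg_of_le (fun k => by positivity) ?_ (hsum.mul_left (1/Δ))
  intro k
  cases k with
  | zero =>
    simp only [Nat.cast_zero, div_zero]
    have := gfp_pos Δ hΔ 0
    positivity
  | succ n =>
    have h1 := gfp_lb Δ hΔ (2*(n+1)) (by omega)
    have hpos : (0:ℝ) < (n:ℝ) + 1 := by positivity
    have hc : ((2*(n+1) : ℕ) : ℝ) = 2*((n:ℝ)+1) := by push_cast; ring
    conv at h1 => lhs; rw [hc]
    have h2 := h1
    have : (1:ℝ)/((n:ℝ)+1) ≤ 1/Δ * (2 * (Δ / (2*((n:ℝ)+1)))) := by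
      rw [div_le_iff₀ hpos]
      field_simp
      rfl
    calc (1:ℝ)/((n+1:ℕ):ℝ) = 1/((n:ℝ)+1) := by push_cast; ring_nf
      _ ≤ 1/Δ * (2 * (Δ / (2*((n:ℝ)+1)))) := this
      _ ≤ 1/Δ * (2 * (Real.Gamma (Δ + (2*(n+1) : ℕ)) / ((2*(n+1)).factorial * Real.Gamma Δ))) := by
          apply mul_le_mul_of_nonneg_left (by linarith) (by positivity)

/-- The radial expansion of the generalized free field four-point function
diverges on the boundary: for `Δ > 0` and `r, s ∈ [0,1]` with `r = 1` or
`s = 1`, the nonnegative double series is not summable. -/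
theorem stmt_19 (Δ : ℝ) (hΔ : 0 < Δ) (r s : ℝ)
    (hr : r ∈ Set.Icc (0 : ℝ) 1) (hs : s ∈ Set.Icc (0 : ℝ) 1)
    (h : r = 1 ∨ s = 1) :
    ¬ Summable (fun p : ℕ × ℕ =>
      (1 + (-1 : ℝ) ^ (p.1 + p.2)) *
        (Real.Gamma (Δ + p.1) * Real.Gamma (Δ + p.2) /
          (p.1.factorial * p.2.factorial * Real.Gamma Δ ^ 2)) *
        r ^ p.1 * s ^ p.2) := by
  intro hsum
  have hg : Real.Gamma Δ ≠ 0 := (Real.Gamma_pos_of_pos hΔ).ne'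
  rcases h with h | h
  · subst h
    have hinj : Function.Injective (fun k : ℕ => ((2*k, 0) : ℕ × ℕ)) := by
      intro a b hab
      simpa using hab
    have h2 := hsum.comp_injective hinj
    apply gfp_not_summable Δ hΔ
    convert h2 using 2 with k
    case e'_3 => rfl
    have he : ((-1:ℝ)) ^ (2*k + 0) = 1 := by
      rw [Nat.add_zero, pow_mul]; norm_num
    simp only [Function.comp, he]
    rw [Nat.cast_zero, add_zero, Nat.factorial_zero]
    field_simp
    ring
  · subst h
    have hinj : Function.Injective (fun k : ℕ => ((0, 2*k) : ℕ × ℕ)) := by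
      intro a b hab
      simpa using hab
    have h2 := hsum.comp_injective hinj
    apply gfp_not_summable Δ hΔ
    convert h2 using 2 with k
    case e'_3 => rfl
    have he : ((-1:ℝ)) ^ (0 + 2*k) = 1 := by
      rw [Nat.zero_add, pow_mul]; norm_num
    simp only [Function.comp, he]
    rw [Nat.cast_zero, add_zero, Nat.factorial_zero]
    field_simp
    ring
end
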